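/- arXiv:1902.01792 — 9 statements merged into one kernel-verified Lean document; each statement's English description precedes it below -/
import Mathlib

section
/- Let γ>1 and v₋>0. There exists a constant c₁>0 (depending only on γ and v₋) such that for every w with 0<w<v₋ and every v with 0<v≤3v₋, one has Q(v|w) ≥ c₁|v−w|². -/
/-- Pressure `p(v) = v^(-γ)`. -/
noncomputable def pres (γ v : ℝ) : ℝ := v ^ (-γ)

/-- `Q(v) = v^(1-γ)/(γ-1)`. -/
noncomputable def Qf (γ v : ℝ) : ℝ := v ^ (1 - γ) / (γ - 1)

/-- Relative functional `Q(v|w) = Q(v) - Q(w) - Q'(w)(v-w)` with `Q'(w) = -p(w)`. -/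
noncomputable def Qrel (γ v w : ℝ) : ℝ := Qf γ v - Qf γ w + pres γ w * (v - w)

private lemma key_ineq (γ M : ℝ) (hγ : 1 < γ) {a b : ℝ} (ha : 0 < a)
    (hab : a ≤ b) (hbM : b ≤ M) :
    γ * M ^ (-γ - 1) * (b - a) ≤ a ^ (-γ) - b ^ (-γ) := by
  have hM : 0 < M := lt_of_lt_of_le (ha.trans_le hab) hbM
  set h : ℝ → ℝ := fun x => -(x ^ (-γ)) - γ * M ^ (-γ - 1) * x with hh
  have hder : ∀ x ∈ Set.Icc a b, HasDerivAt h (γ * x ^ (-γ - 1) - γ * M ^ (-γ - 1)) x := by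
    intro x hx
    have hx0 : 0 < x := lt_of_lt_of_le ha hx.1
    have h1 : HasDerivAt (fun x : ℝ => x ^ (-γ)) ((-γ) * x ^ (-γ - 1)) x :=
      Real.hasDerivAt_rpow_const (Or.inl hx0.ne')
    have h2 : HasDerivAt (fun x : ℝ => γ * M ^ (-γ - 1) * x) (γ * M ^ (-γ - 1)) x := by
      simpa using (hasDerivAt_id x).const_mul (γ * M ^ (-γ - 1))
    have := (h1.neg).sub h2
    convert this using 1
    rfl
    rfl
    rfl
    ring
  have hmono : MonotoneOn h (Set.Icc a b) := by
    apply monotoneOn_of_deriv_nonneg (convex_Icc a b)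
    · exact ContinuousOn.congr (fun x hx => (hder x hx).continuousAt.continuousWithinAt)
        (fun x hx => rfl) |>.mono (by simp)
    · intro x hx
      rw [interior_Icc] at hx
      exact ((hder x (Set.mem_Icc_of_Ioo hx)).differentiableAt).differentiableWithinAt
    · intro x hx
      rw [interior_Icc] at hx
      have hx0 : 0 < x := lt_of_lt_of_le ha hx.1.le
      rw [HasDerivAt.deriv (hder x (Set.mem_Icc_of_Ioo hx))]
      have : M ^ (-γ - 1) ≤ x ^ (-γ - 1) :=
        Real.rpow_le_rpow_of_nonpos hx0 (hx.2.le.trans hbM) (by linarith)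
      nlinarith
  have := hmono (Set.left_mem_Icc.mpr hab) (Set.right_mem_Icc.mpr hab) hab
  simp only [hh] at this
  nlinarith

private lemma hasDerivAt_g (γ c P w : ℝ) {x : ℝ} (hγ : 1 < γ) (hx : 0 < x) :
    HasDerivAt (fun v => Qf γ v - Qf γ w + P * (v - w) - c * (v - w) ^ 2)
      (-(x ^ (-γ)) + P - 2 * c * (x - w)) x := by
  have h1 : HasDerivAt (fun v : ℝ => Qf γ v) (-(x ^ (-γ))) x := by
    have := (Real.hasDerivAt_rpow_const (p := 1 - γ) (Or.inl hx.ne')).div_const (γ - 1)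
    have hne : γ - 1 ≠ 0 := by linarith
    convert this using 1
    rfl
    rfl
    rfl
    rw [show (1 - γ - 1 : ℝ) = -γ by ring]
    field_simp
    ring
  have h2 : HasDerivAt (fun v : ℝ => P * (v - w)) P x := by
    simpa using ((hasDerivAt_id x).sub_const w).const_mul P
  have h3 : HasDerivAt (fun v : ℝ => c * (v - w) ^ 2) (2 * c * (x - w)) x := by
    have := (((hasDerivAt_id x).sub_const w).pow 2).const_mul c
    convert this using 1
    rfl
    rfl
    rfl
    simp only [id_eq]
    ring
  have := (h1.sub_const (Qf γ w)).add h2 |>.sub h3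
  convert this using 1
  rfl
  rfl
  rfl
  try ring

theorem stmt0 (γ vm : ℝ) (hγ : 1 < γ) (hvm : 0 < vm) :
    ∃ c₁ > (0 : ℝ), ∀ w : ℝ, 0 < w → w < vm → ∀ v : ℝ, 0 < v → v ≤ 3 * vm →
      c₁ * |v - w| ^ 2 ≤ Qrel γ v w := by
  set M := 3 * vm with hM
  have hM0 : 0 < M := by positivity
  set c : ℝ := γ * M ^ (-γ - 1) / 2 with hc
  have hc0 : 0 < c := by
    have : (0:ℝ) < M ^ (-γ - 1) := Real.rpow_pos_of_pos hM0 _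
    positivity
  refine ⟨c, hc0, ?_⟩
  intro w hw hwvm v hv hvM
  have hwM : w ≤ M := by linarith
  rw [sq_abs]
  set g : ℝ → ℝ := fun v => Qf γ v - Qf γ w + pres γ w * (v - w) - c * (v - w) ^ 2 with hg
  have hgw : g w = 0 := by simp [hg]
  have hgoal : 0 ≤ g v → c * (v - w) ^ 2 ≤ Qrel γ v w := by
    intro h; simp only [hg] at h; unfold Qrel; linarith
  apply hgoal
  have hder : ∀ x ∈ Set.Icc (min v w) (max v w), HasDerivAt g
      (-(x ^ (-γ)) + pres γ w * 1 - 2 * c * (x - w)) x := by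
    intro x hx
    have hx0 : 0 < x := lt_of_lt_of_le (lt_min hv hw) hx.1
    simpa using hasDerivAt_g γ c (pres γ w) w hγ hx0
  rcases le_total w v with hcase | hcase
  · -- w ≤ v : g monotone on [w, v]
    have hmono : MonotoneOn g (Set.Icc w v) := by
      apply monotoneOn_of_deriv_nonneg (convex_Icc w v)
      · intro x hx
        have hx0 : 0 < x := lt_of_lt_of_le hw hx.1
        exact (hasDerivAt_g γ c (pres γ w) w hγ hx0).continuousAt.continuousWithinAt
      · intro x hx
        rw [interior_Icc] at hx
        have hx0 : 0 < x := lt_of_lt_of_le hw hx.1.le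
        exact (hasDerivAt_g γ c (pres γ w) w hγ hx0).differentiableAt.differentiableWithinAt
      · intro x hx
        rw [interior_Icc] at hx
        have hx0 : 0 < x := lt_of_lt_of_le hw hx.1.le
        rw [(hasDerivAt_g γ c (pres γ w) w hγ hx0).deriv]
        have hkey := key_ineq γ M hγ hw hx.1.le (le_trans hx.2.le hvM)
        unfold pres
        have h2c : 2 * c = γ * M ^ (-γ - 1) := by rw [hc]; ring
        nlinarith [hx.1.le]
    have := hmono (Set.left_mem_Icc.mpr hcase) (Set.right_mem_Icc.mpr hcase) hcase
    rw [hgw] at this; exact this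
  · -- v ≤ w : g antitone on [v, w]
    have hanti : AntitoneOn g (Set.Icc v w) := by
      apply antitoneOn_of_deriv_nonpos (convex_Icc v w)
      · intro x hx
        have hx0 : 0 < x := lt_of_lt_of_le hv hx.1
        exact (hasDerivAt_g γ c (pres γ w) w hγ hx0).continuousAt.continuousWithinAt
      · intro x hx
        rw [interior_Icc] at hx
        have hx0 : 0 < x := lt_of_lt_of_le hv hx.1.le
        exact (hasDerivAt_g γ c (pres γ w) w hγ hx0).differentiableAt.differentiableWithinAt
      · intro x hx
        rw [interior_Icc] at hx
        have hx0 : 0 < x := lt_of_lt_of_le hv hx.1.le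
        rw [(hasDerivAt_g γ c (pres γ w) w hγ hx0).deriv]
        have hkey := key_ineq γ M hγ hx0 hx.2.le hwM
        unfold pres
        have h2c : 2 * c = γ * M ^ (-γ - 1) := by rw [hc]; ring
        nlinarith [hx.2.le]
    have := hanti (Set.left_mem_Icc.mpr hcase) (Set.right_mem_Icc.mpr hcase) hcase
    rw [hgw] at this; exact this
end

section
/- Let γ>1 and v₋>0. There exists a constant c₂>0 (depending only on γ and v₋) such that for every w with 0<w<v₋ and every v with v≥3v₋, one has Q(v|w) ≥ c₂|v−w|. -/
lemma Qf_hasDerivAt (γ x : ℝ) (hγ : 1 < γ) (hx : 0 < x) :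
    HasDerivAt (Qf γ) (-(x ^ (-γ))) x := by
  have h : HasDerivAt (fun y : ℝ => y ^ (1 - γ)) ((1 - γ) * x ^ (1 - γ - 1)) x :=
    Real.hasDerivAt_rpow_const (Or.inl hx.ne')
  have h2 := h.div_const (γ - 1)
  refine HasDerivAt.congr_deriv (f := Qf γ) h2 ?_
  symm
  have : (1 : ℝ) - γ - 1 = -γ := by ring
  rw [this]
  rw [eq_div_iff (by linarith : γ - 1 ≠ 0)]
  ring

/-- Gradient inequality: `Qrel γ v u ≥ 0` for `0 < u ≤ v`. -/
lemma Qrel_nonneg (γ u v : ℝ) (hγ : 1 < γ) (hu : 0 < u) (huv : u ≤ v) :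
    0 ≤ Qrel γ v u := by
  set g : ℝ → ℝ := fun x => Qf γ x + pres γ u * x with hg
  have hmono : MonotoneOn g (Set.Ici u) := by
    apply monotoneOn_of_deriv_nonneg (convex_Ici u)
    · apply ContinuousOn.add
      · intro x hx
        exact ((Qf_hasDerivAt γ x hγ (lt_of_lt_of_le hu hx)).continuousAt).continuousWithinAt
      · exact (continuous_const.mul continuous_id).continuousOn
    · intro x hx
      rw [interior_Ici] at hx
      have hx0 : 0 < x := lt_trans hu hx
      exact ((Qf_hasDerivAt γ x hγ hx0).add
        ((hasDerivAt_id x).const_mul (pres γ u))).differentiableAt.differentiableWithinAt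
    · intro x hx
      rw [interior_Ici] at hx
      have hx0 : 0 < x := lt_trans hu hx
      have hd : HasDerivAt g (-(x ^ (-γ)) + pres γ u * 1) x :=
        (Qf_hasDerivAt γ x hγ hx0).add ((hasDerivAt_id x).const_mul (pres γ u))
      rw [hd.deriv]
      have : x ^ (-γ) ≤ u ^ (-γ) :=
        le_of_lt (Real.rpow_lt_rpow_of_neg hu hx (by linarith))
      simp only [pres, mul_one]
      linarith
  have := hmono (Set.self_mem_Ici) (Set.mem_Ici.mpr huv) huv
  simp only [hg] at this
  unfold Qrel
  linarith

theorem stmt1 (γ vm : ℝ) (hγ : 1 < γ) (hvm : 0 < vm) :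
    ∃ c₂ > (0 : ℝ), ∀ w : ℝ, 0 < w → w < vm → ∀ v : ℝ, 3 * vm ≤ v →
      c₂ * |v - w| ≤ Qrel γ v w := by
  have hneg : -γ < 0 := by linarith
  have h2vm : (0:ℝ) < 2 * vm := by linarith
  have hK : (2 * vm) ^ (-γ) < vm ^ (-γ) :=
    Real.rpow_lt_rpow_of_neg hvm (by linarith) hneg
  set K : ℝ := vm ^ (-γ) - (2 * vm) ^ (-γ) with hKdef
  have hKpos : 0 < K := by simp [hKdef]; linarith
  refine ⟨K / 3, by positivity, ?_⟩
  intro w hw hwvm v hv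
  have hvpos : 0 < v := by linarith
  have hwv : w < v := by linarith
  have habs : |v - w| = v - w := abs_of_pos (by linarith)
  -- Qrel γ v w = Qrel γ (2vm) w + (Qf v - Qf (2vm) + pres w * (v - 2vm))
  have h1 : 0 ≤ Qrel γ (2 * vm) w := Qrel_nonneg γ w (2 * vm) hγ hw (by linarith)
  -- gradient ineq at 2vm: Qf v - Qf (2vm) ≥ -(pres (2vm)) * (v - 2vm)
  have h2 : 0 ≤ Qrel γ v (2 * vm) := Qrel_nonneg γ (2 * vm) v hγ h2vm (by linarith)
  -- pres w ≥ pres vm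
  have h3 : pres γ vm ≤ pres γ w :=
    le_of_lt (Real.rpow_lt_rpow_of_neg hw hwvm hneg)
  have hsplit : Qrel γ v w =
      Qrel γ (2 * vm) w + Qrel γ v (2 * vm)
        + (pres γ w - pres γ (2 * vm)) * (v - 2 * vm) := by
    unfold Qrel; ring
  have hKle : K ≤ pres γ w - pres γ (2 * vm) := by
    simp only [pres] at h3
    simp only [pres, hKdef]
    have : (2:ℝ)*vm ≠ 0 := by positivity
    linarith
  have hvd : v / 3 ≤ v - 2 * vm := by linarith
  have hstep : K * (v - 2 * vm) ≤ Qrel γ v w := by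
    rw [hsplit]
    have : K * (v - 2 * vm) ≤ (pres γ w - pres γ (2 * vm)) * (v - 2 * vm) :=
      mul_le_mul_of_nonneg_right hKle (by linarith)
    linarith
  rw [habs]
  calc K / 3 * (v - w) ≤ K / 3 * v := by
        apply mul_le_mul_of_nonneg_left (by linarith) (by positivity)
    _ = K * (v / 3) := by ring
    _ ≤ K * (v - 2 * vm) := mul_le_mul_of_nonneg_left hvd hKpos.le
    _ ≤ Qrel γ v w := hstep
end

section
/- Let γ>1, v₋>0, and δ*>0. There exists a constant C>0 (depending only on γ, v₋ and δ*) such that for all u,v,w>0 satisfying (0<w≤u≤v or 0<v≤u≤w) together with v₋ > w > v₋−δ*/2 and |w−u| > δ*, one has Q(v|w) − Q(u|w) ≥ C|u−v|. -/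
open Real Set

/-- On `[a, b]` with `0 < a`, if `C + x^(-γ) ≤ K` on the interval, then
the increment of `x ↦ x^(1-γ)/(γ-1) + K*x` is at least `C*(b-a)`. -/
lemma incr_lower (γ K C a b : ℝ) (hγ : 1 < γ) (ha : 0 < a) (hab : a ≤ b)
    (h : ∀ x ∈ Set.Icc a b, C + x ^ (-γ) ≤ K) :
    C * (b - a) ≤ (b ^ (1-γ) / (γ-1) + K * b) - (a ^ (1-γ) / (γ-1) + K * a) := by
  set F : ℝ → ℝ := fun x => x ^ (1-γ) / (γ-1) + K * x - C * x with hF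
  have hmono : MonotoneOn F (Set.Icc a b) := by
    apply monotoneOn_of_hasDerivWithinAt_nonneg (f' := fun x => K - C - x ^ (-γ))
      (convex_Icc a b)
    · apply ContinuousOn.sub
      apply ContinuousOn.add
      · exact (continuousOn_id.rpow_const (fun x hx => Or.inl (ne_of_gt (lt_of_lt_of_le ha hx.1)))).div_const _
      · exact (continuousOn_id.const_smul K)
      · exact continuousOn_id.const_smul C
    · intro x hx
      rw [interior_Icc] at hx
      have hx0 : x ≠ 0 := ne_of_gt (lt_trans ha hx.1)
      have h1 : HasDerivAt (fun y : ℝ => y ^ (1-γ)) ((1-γ) * x ^ (1-γ-1)) x :=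
        Real.hasDerivAt_rpow_const (Or.inl hx0)
      have h2 : HasDerivAt F ((1-γ) * x ^ (1-γ-1) / (γ-1) + K - C) x := by
        have := ((h1.div_const (γ-1)).add ((hasDerivAt_id x).const_mul K)).sub
          ((hasDerivAt_id x).const_mul C)
        simp only [mul_one] at this
        exact this
      have he : (1-γ) * x ^ (1-γ-1) / (γ-1) + K - C = K - C - x ^ (-γ) := by
        have hγ1 : γ - 1 ≠ 0 := sub_ne_zero.mpr (ne_of_gt hγ)
        rw [show (1:ℝ)-γ-1 = -γ by ring]
        field_simp
        ring
      exact (he ▸ h2).hasDerivWithinAt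
    · intro x hx
      rw [interior_Icc] at hx
      have := h x (Set.mem_Icc.mpr ⟨hx.1.le, hx.2.le⟩)
      linarith
  have := hmono (Set.left_mem_Icc.mpr hab) (Set.right_mem_Icc.mpr hab) hab
  simp only [hF] at this
  linarith

/-- On `[b, a]` with `0 < b`, if `K + C ≤ x^(-γ)` on the interval, then
the decrement of `x ↦ x^(1-γ)/(γ-1) + K*x` from `a` down to `b` is at least `C*(a-b)`. -/
lemma decr_lower (γ K C a b : ℝ) (hγ : 1 < γ) (hb : 0 < b) (hba : b ≤ a)
    (h : ∀ x ∈ Set.Icc b a, K + C ≤ x ^ (-γ)) :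
    C * (a - b) ≤ (b ^ (1-γ) / (γ-1) + K * b) - (a ^ (1-γ) / (γ-1) + K * a) := by
  set F : ℝ → ℝ := fun x => x ^ (1-γ) / (γ-1) + K * x + C * x with hF
  have hanti : AntitoneOn F (Set.Icc b a) := by
    apply antitoneOn_of_hasDerivWithinAt_nonpos (f' := fun x => K + C - x ^ (-γ))
      (convex_Icc b a)
    · apply ContinuousOn.add
      apply ContinuousOn.add
      · exact (continuousOn_id.rpow_const (fun x hx => Or.inl (ne_of_gt (lt_of_lt_of_le hb hx.1)))).div_const _
      · exact (continuousOn_id.const_smul K)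
      · exact continuousOn_id.const_smul C
    · intro x hx
      rw [interior_Icc] at hx
      have hx0 : x ≠ 0 := ne_of_gt (lt_trans hb hx.1)
      have h1 : HasDerivAt (fun y : ℝ => y ^ (1-γ)) ((1-γ) * x ^ (1-γ-1)) x :=
        Real.hasDerivAt_rpow_const (Or.inl hx0)
      have h2 : HasDerivAt F ((1-γ) * x ^ (1-γ-1) / (γ-1) + K + C) x := by
        have := ((h1.div_const (γ-1)).add ((hasDerivAt_id x).const_mul K)).add
          ((hasDerivAt_id x).const_mul C)
        simp only [mul_one] at this
        exact this
      have he : (1-γ) * x ^ (1-γ-1) / (γ-1) + K + C = K + C - x ^ (-γ) := by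
        have hγ1 : γ - 1 ≠ 0 := sub_ne_zero.mpr (ne_of_gt hγ)
        rw [show (1:ℝ)-γ-1 = -γ by ring]
        field_simp
        ring
      exact (he ▸ h2).hasDerivWithinAt
    · intro x hx
      rw [interior_Icc] at hx
      have := h x (Set.mem_Icc.mpr ⟨hx.1.le, hx.2.le⟩)
      linarith
  have := hanti (Set.left_mem_Icc.mpr hba) (Set.right_mem_Icc.mpr hba) hba
  simp only [hF] at this
  linarith

/-- Key gap estimate: `a^(-γ) - (a+d)^(-γ) ≥ γ d (a+d)^(-γ-1)`. -/
lemma key_gap (γ a d : ℝ) (hγ : 1 < γ) (ha : 0 < a) (hd : 0 < d) :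
    γ * d * (a + d) ^ (-γ - 1) ≤ a ^ (-γ) - (a + d) ^ (-γ) := by
  set K := γ * (a + d) ^ (-γ - 1) with hK
  set G : ℝ → ℝ := fun t => t ^ (-γ) + K * t with hG
  have had : (0:ℝ) < a + d := by linarith
  have hanti : AntitoneOn G (Set.Icc a (a + d)) := by
    apply antitoneOn_of_hasDerivWithinAt_nonpos (f' := fun t => -γ * t ^ (-γ - 1) + K)
      (convex_Icc a (a + d))
    · apply ContinuousOn.add
      · exact continuousOn_id.rpow_const (fun x hx => Or.inl (ne_of_gt (lt_of_lt_of_le ha hx.1)))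
      · exact continuousOn_id.const_smul K
    · intro t ht
      rw [interior_Icc] at ht
      have ht0 : t ≠ 0 := ne_of_gt (lt_trans ha ht.1)
      have h1 : HasDerivAt (fun y : ℝ => y ^ (-γ)) (-γ * t ^ (-γ - 1)) t :=
        Real.hasDerivAt_rpow_const (Or.inl ht0)
      have h2 : HasDerivAt G (-γ * t ^ (-γ - 1) + K) t := by
        have := h1.add ((hasDerivAt_id t).const_mul K)
        simp only [mul_one] at this
        exact this
      exact h2.hasDerivWithinAt
    · intro t ht
      rw [interior_Icc] at ht
      have h1 : (a + d) ^ (-γ - 1) ≤ t ^ (-γ - 1) :=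
        Real.rpow_le_rpow_of_nonpos (lt_trans ha ht.1) ht.2.le (by linarith)
      have hγ0 : (0:ℝ) < γ := by linarith
      rw [hK]
      nlinarith
  have hmem1 : a ∈ Set.Icc a (a + d) := Set.left_mem_Icc.mpr (by linarith)
  have hmem2 : a + d ∈ Set.Icc a (a + d) := Set.right_mem_Icc.mpr (by linarith)
  have := hanti hmem1 hmem2 (by linarith)
  simp only [hG, hK] at this
  nlinarith

theorem stmt3 (γ vm δs : ℝ) (hγ : 1 < γ) (hvm : 0 < vm) (hδs : 0 < δs) :
    ∃ C > (0 : ℝ), ∀ u v w : ℝ, 0 < u → 0 < v → 0 < w →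
      ((w ≤ u ∧ u ≤ v) ∨ (v ≤ u ∧ u ≤ w)) →
      w < vm → vm - δs / 2 < w → δs < |w - u| →
      C * |u - v| ≤ Qrel γ v w - Qrel γ u w := by
  have hvmδ : (0:ℝ) < vm + δs := by linarith
  refine ⟨γ * δs * (vm + δs) ^ (-γ - 1), by positivity, ?_⟩
  intro u v w hu hv hw hcase hw1 hw2 hgap
  have hdiff : Qrel γ v w - Qrel γ u w
      = (v ^ (1-γ) / (γ-1) + w ^ (-γ) * v) - (u ^ (1-γ) / (γ-1) + w ^ (-γ) * u) := by
    unfold Qrel Qf pres; ring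
  rcases hcase with ⟨hwu, huv⟩ | ⟨hvu, huw⟩
  · -- w ≤ u ≤ v
    have habs : |w - u| = u - w := by rw [abs_sub_comm]; exact abs_of_nonneg (by linarith)
    rw [habs] at hgap
    have habs2 : |u - v| = v - u := by rw [abs_sub_comm]; exact abs_of_nonneg (by linarith)
    rw [habs2, hdiff]
    apply incr_lower γ _ _ u v hγ hu huv
    intro x hx
    have hx0 : (0:ℝ) < w + δs := by linarith
    have h1 : x ^ (-γ) ≤ (w + δs) ^ (-γ) :=
      Real.rpow_le_rpow_of_nonpos hx0 (by linarith [hx.1]) (by linarith)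
    have h2 := key_gap γ w δs hγ hw hδs
    have h3 : (vm + δs) ^ (-γ - 1) ≤ (w + δs) ^ (-γ - 1) :=
      Real.rpow_le_rpow_of_nonpos hx0 (by linarith) (by linarith)
    have h4 : γ * δs * (vm + δs) ^ (-γ - 1) ≤ γ * δs * (w + δs) ^ (-γ - 1) :=
      mul_le_mul_of_nonneg_left h3 (by positivity)
    linarith
  · -- v ≤ u ≤ w
    have habs : |w - u| = w - u := abs_of_nonneg (by linarith)
    rw [habs] at hgap
    have habs2 : |u - v| = u - v := abs_of_nonneg (by linarith)
    rw [habs2, hdiff]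
    apply decr_lower γ _ _ u v hγ hv hvu
    intro x hx
    have hwδ : (0:ℝ) < w - δs := by linarith
    have h1 : (w - δs) ^ (-γ) ≤ x ^ (-γ) :=
      Real.rpow_le_rpow_of_nonpos (lt_of_lt_of_le hv hx.1) (by linarith [hx.2]) (by linarith)
    have h2 := key_gap γ (w - δs) δs hγ hwδ hδs
    rw [show w - δs + δs = w by ring] at h2
    have h3 : (vm + δs) ^ (-γ - 1) ≤ w ^ (-γ - 1) :=
      Real.rpow_le_rpow_of_nonpos hw (by linarith) (by linarith)
    have h4 : γ * δs * (vm + δs) ^ (-γ - 1) ≤ γ * δs * w ^ (-γ - 1) :=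
      mul_le_mul_of_nonneg_left h3 (by positivity)
    linarith
end

section
/- Let γ>1 and M>1. There exists a constant C>0 (depending only on γ and M) such that for every k ≥ 3M, every w with M⁻¹ < w < M, and every v>0, one has max{ (k⁻¹−v)₊ , (v−k)₊ } ≤ C·Q(v|w), where (y)₊ := max(y,0). -/
/-- Bernoulli-type inequality for nonpositive exponents. -/
lemma bern_neg {θ t : ℝ} (hθ : θ ≤ 0) (ht : 0 < t) : 1 + θ * (t - 1) ≤ t ^ θ := by
  have h1 : t ^ θ = Real.exp (Real.log t * θ) := Real.rpow_def_of_pos ht θ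
  have h2 : Real.log t ≤ t - 1 := Real.log_le_sub_one_of_pos ht
  have h4 := Real.add_one_le_exp (Real.log t * θ)
  rw [h1]; nlinarith

/-- Convexity: the relative functional is nonnegative. -/
lemma qrel_nonneg (γ : ℝ) (hγ : 1 < γ) {v u : ℝ} (hv : 0 < v) (hu : 0 < u) :
    0 ≤ Qrel γ v u := by
  set t := v / u with htdef
  have ht : 0 < t := div_pos hv hu
  have hvt : v = u * t := by rw [htdef]; field_simp
  have hb : 1 + (1 - γ) * (t - 1) ≤ t ^ (1 - γ) := bern_neg (by linarith) ht
  have ha : (0:ℝ) < u ^ (-γ) := Real.rpow_pos_of_pos hu _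
  have hv1 : v ^ (1 - γ) = u ^ (1 - γ) * t ^ (1 - γ) := by
    rw [hvt, Real.mul_rpow hu.le ht.le]
  have hu1 : u ^ (1 - γ) = u * u ^ (-γ) := by
    rw [show (1 - γ) = 1 + (-γ) by ring, Real.rpow_add hu, Real.rpow_one]
  have hγ1 : (0:ℝ) < γ - 1 := by linarith
  unfold Qrel Qf pres
  rw [hv1, hu1, hvt]
  have key : 0 ≤ (u * u ^ (-γ) * t ^ (1-γ) - u * u ^ (-γ))
      + (γ - 1) * (u ^ (-γ) * (u * t - u)) := by
    nlinarith [mul_pos hu ha]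
  have e : u * u ^ (-γ) * t ^ (1-γ) / (γ-1) - u * u ^ (-γ) / (γ-1) + u ^ (-γ) * (u * t - u)
      = ((u * u ^ (-γ) * t ^ (1-γ) - u * u ^ (-γ))
        + (γ - 1) * (u ^ (-γ) * (u * t - u))) / (γ-1) := by
    field_simp
  rw [e]
  exact div_nonneg key hγ1.le

theorem stmt5 (γ M : ℝ) (hγ : 1 < γ) (hM : 1 < M) :
    ∃ C > (0 : ℝ), ∀ k : ℝ, 3 * M ≤ k → ∀ w : ℝ, M⁻¹ < w → w < M → ∀ v : ℝ, 0 < v →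
      max (max (k⁻¹ - v) 0) (max (v - k) 0) ≤ C * Qrel γ v w := by
  have hlog3 : 1 < Real.log 3 := by
    rw [Real.lt_log_iff_exp_lt (by norm_num)]
    calc Real.exp 1 < 2.7182818286 := Real.exp_one_lt_d9
      _ < 3 := by norm_num
  have h3γ : (3:ℝ) ^ (-γ) < 1 :=
    Real.rpow_lt_one_of_one_lt_of_neg (by norm_num) (by linarith)
  have h3γpos : (0:ℝ) < 3 ^ (-γ) := Real.rpow_pos_of_pos (by norm_num) _
  have hMγpos : (0:ℝ) < M ^ γ := Real.rpow_pos_of_pos (by linarith) _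
  set C := max (Real.log 3 - 1)⁻¹ (M ^ γ / (1 - 3 ^ (-γ))) with hC
  have hC1 : (Real.log 3 - 1)⁻¹ ≤ C := le_max_left _ _
  have hC2 : M ^ γ / (1 - 3 ^ (-γ)) ≤ C := le_max_right _ _
  have hCpos : 0 < C := lt_of_lt_of_le (inv_pos.mpr (by linarith)) hC1
  refine ⟨C, hCpos, fun k hk w hw1 hw2 v hv => ?_⟩
  have hM0 : (0:ℝ) < M := by linarith
  have hw0 : (0:ℝ) < w := lt_trans (by positivity) hw1
  have hk0 : (0:ℝ) < k := by nlinarith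
  have hQnn : 0 ≤ Qrel γ v w := qrel_nonneg γ hγ hv hw0
  have hγ1 : (0:ℝ) < γ - 1 := by linarith
  rw [max_le_iff, max_le_iff, max_le_iff]
  refine ⟨⟨?_, mul_nonneg hCpos.le hQnn⟩, ?_, mul_nonneg hCpos.le hQnn⟩
  · -- k⁻¹ - v ≤ C * Qrel
    rcases le_or_gt (k⁻¹ - v) 0 with h | h
    · exact le_trans h (mul_nonneg hCpos.le hQnn)
    · have hkinv : k⁻¹ ≤ (3*M)⁻¹ := inv_anti₀ (by positivity) hk
      have hvk : v < (3*M)⁻¹ := by linarith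
      have hMg0 : (0:ℝ) < M ^ (γ-1) := Real.rpow_pos_of_pos hM0 _
      have hQ1 : (3*M) ^ (γ-1) ≤ v ^ (1-γ) := by
        have h1 : v ^ (1-γ) ≥ ((3*M)⁻¹) ^ (1-γ) :=
          Real.rpow_le_rpow_of_nonpos hv hvk.le (by linarith)
        have h2 : ((3*M)⁻¹ : ℝ) ^ (1-γ) = (3*M) ^ (γ-1) := by
          rw [Real.inv_rpow (by positivity), ← Real.rpow_neg (by positivity)]
          congr 1; ring
        linarith
      have hQ2 : w ^ (1-γ) ≤ M ^ (γ-1) := by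
        have h1 : w ^ (1-γ) ≤ (M⁻¹) ^ (1-γ) :=
          Real.rpow_le_rpow_of_nonpos (by positivity) hw1.le (by linarith)
        have h2 : (M⁻¹ : ℝ) ^ (1-γ) = M ^ (γ-1) := by
          rw [Real.inv_rpow hM0.le, ← Real.rpow_neg hM0.le]
          congr 1; ring
        linarith
      have hpw : pres γ w * w = w ^ (1-γ) := by
        unfold pres
        rw [show w ^ (-γ) * w = w ^ (-γ) * w ^ (1:ℝ) by rw [Real.rpow_one],
          ← Real.rpow_add hw0]
        congr 1; ring
      have h3M : ((3*M):ℝ) ^ (γ-1) = 3 ^ (γ-1) * M ^ (γ-1) := Real.mul_rpow (by norm_num) hM0.le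
      have h3b : 1 + (γ-1) * Real.log 3 ≤ (3:ℝ) ^ (γ-1) := by
        have h1 : (3:ℝ) ^ (γ-1) = Real.exp (Real.log 3 * (γ-1)) :=
          Real.rpow_def_of_pos (by norm_num) _
        have h2 := Real.add_one_le_exp (Real.log 3 * (γ-1))
        rw [h1]; nlinarith
      have hM1 : (1:ℝ) ≤ M ^ (γ-1) := Real.one_le_rpow hM.le (by linarith)
      have hpwv : 0 ≤ pres γ w * v := by
        have hpos : (0:ℝ) < w ^ (-γ) := Real.rpow_pos_of_pos hw0 _
        unfold pres; positivity
      have hQlb : M ^ (γ-1) * (Real.log 3 - 1) ≤ Qrel γ v w := by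
        unfold Qrel Qf
        have expand : v ^ (1-γ) / (γ-1) - w ^ (1-γ) / (γ-1) + pres γ w * (v - w)
            = (v ^ (1-γ) - w ^ (1-γ) + (pres γ w * v) * (γ-1) - (pres γ w * w) * (γ-1))
              / (γ-1) := by field_simp; ring
        rw [expand, hpw, le_div_iff₀ hγ1]
        have key : M ^ (γ-1) * (3 ^ (γ-1) - 1) ≥ M ^ (γ-1) * ((γ-1) * Real.log 3) :=
          mul_le_mul_of_nonneg_left (by linarith) hMg0.le
        nlinarith [h3M, hQ1, hQ2, hpwv]
      have hk1 : (1:ℝ) ≤ k := by nlinarith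
      have hki : k⁻¹ ≤ 1 := by
        have := inv_anti₀ one_pos hk1
        simpa using this
      have hQlb' : Real.log 3 - 1 ≤ Qrel γ v w := by
        have hm := mul_le_mul_of_nonneg_right hM1 (show (0:ℝ) ≤ Real.log 3 - 1 by linarith)
        rw [one_mul] at hm
        linarith
      have hone : 1 ≤ C * Qrel γ v w := by
        have h1 : (Real.log 3 - 1)⁻¹ * (Real.log 3 - 1) = 1 :=
          inv_mul_cancel₀ (by linarith)
        have h2 : (Real.log 3 - 1)⁻¹ * (Real.log 3 - 1) ≤ C * Qrel γ v w :=
          mul_le_mul hC1 hQlb' (by linarith) hCpos.le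
        linarith
      linarith
  · -- v - k ≤ C * Qrel
    rcases le_or_gt (v - k) 0 with h | h
    · exact le_trans h (mul_nonneg hCpos.le hQnn)
    · have hkv : k ≤ v := by linarith
      have hQk : 0 ≤ Qrel γ v k := qrel_nonneg γ hγ hv hk0
      have hQkw : 0 ≤ Qrel γ k w := qrel_nonneg γ hγ hk0 hw0
      have hident : Qrel γ v w = Qrel γ v k + Qrel γ k w + (pres γ w - pres γ k) * (v - k) := by
        unfold Qrel Qf pres; ring
      have hpw : M ^ (-γ) ≤ pres γ w := by
        unfold pres
        exact Real.rpow_le_rpow_of_nonpos hw0 hw2.le (by linarith)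
      have hpk : pres γ k ≤ (3*M) ^ (-γ) := by
        unfold pres
        exact Real.rpow_le_rpow_of_nonpos (by positivity) hk (by linarith)
      have h3Mγ : ((3*M):ℝ) ^ (-γ) = 3 ^ (-γ) * M ^ (-γ) := Real.mul_rpow (by norm_num) hM0.le
      have hMγ : (0:ℝ) < M ^ (-γ) := Real.rpow_pos_of_pos hM0 _
      have hcoef : M ^ (-γ) * (1 - 3 ^ (-γ)) ≤ pres γ w - pres γ k := by
        rw [h3Mγ] at hpk
        have e : M ^ (-γ) * (1 - 3 ^ (-γ)) = M ^ (-γ) - 3 ^ (-γ) * M ^ (-γ) := by ring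
        linarith
      have hd : (0:ℝ) < M ^ (-γ) * (1 - 3 ^ (-γ)) := mul_pos hMγ (by linarith)
      have hQlb : M ^ (-γ) * (1 - 3 ^ (-γ)) * (v - k) ≤ Qrel γ v w := by
        rw [hident]
        have hm := mul_le_mul_of_nonneg_right hcoef (show (0:ℝ) ≤ v - k by linarith)
        linarith
      have hinv : M ^ (-γ) = (M ^ γ)⁻¹ := Real.rpow_neg hM0.le γ
      have hdinv : (M ^ (-γ) * (1 - 3 ^ (-γ)))⁻¹ = M ^ γ / (1 - 3 ^ (-γ)) := by
        rw [hinv, mul_inv, inv_inv, div_eq_mul_inv]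
      have h2 : v - k ≤ (M ^ (-γ) * (1 - 3 ^ (-γ)))⁻¹ * Qrel γ v w := by
        have h3 := mul_le_mul_of_nonneg_left hQlb (inv_nonneg.mpr hd.le)
        rw [← mul_assoc, inv_mul_cancel₀ hd.ne', one_mul] at h3
        exact h3
      have h4 : (M ^ (-γ) * (1 - 3 ^ (-γ)))⁻¹ * Qrel γ v w ≤ C * Qrel γ v w := by
        apply mul_le_mul_of_nonneg_right _ hQnn
        rw [hdinv]; exact hC2
      linarith
end

section
/- Let γ>1 and M>1. There exist constants C>0 and k₀>1 (depending only on γ and M) such that for all w₁,w₂ with M⁻¹ < w₁,w₂ < M and every v with 0 < v < k₀⁻¹ or v > k₀, one has Q(v|w₁) ≤ C·Q(v|w₂). -/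
lemma Qrel_eq (γ : ℝ) (hγ : 1 < γ) {w : ℝ} (hw : 0 < w) (v : ℝ) :
    Qrel γ v w = Qf γ v + w ^ (-γ) * v - γ / (γ - 1) * w ^ (1 - γ) := by
  have h1 : w ^ (-γ) * w = w ^ (1 - γ) := by
    rw [← Real.rpow_add_one hw.ne' (-γ)]; ring_nf
  have hg : γ - 1 ≠ 0 := by linarith
  unfold Qrel Qf pres
  rw [mul_sub, h1]
  field_simp
  ring

set_option maxHeartbeats 800000 in
theorem stmt6 (γ M : ℝ) (hγ : 1 < γ) (hM : 1 < M) :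
    ∃ C > (0 : ℝ), ∃ k₀ > (1 : ℝ), ∀ w₁ w₂ : ℝ, M⁻¹ < w₁ → w₁ < M → M⁻¹ < w₂ → w₂ < M →
      ∀ v : ℝ, ((0 < v ∧ v < k₀⁻¹) ∨ k₀ < v) →
      Qrel γ v w₁ ≤ C * Qrel γ v w₂ := by
  have hM0 : (0:ℝ) < M := by linarith
  have hγ1 : (0:ℝ) < γ - 1 := by linarith
  set A : ℝ := M ^ γ with hA
  have hA0 : 0 < A := Real.rpow_pos_of_pos hM0 γ
  set B : ℝ := γ / (γ - 1) * M ^ (γ - 1) with hB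
  have hB0 : 0 < B := by
    have := Real.rpow_pos_of_pos hM0 (γ - 1)
    positivity
  set s : ℝ := 2 * γ * M ^ (γ - 1) with hs
  have hs0 : 0 < s := by
    have := Real.rpow_pos_of_pos hM0 (γ - 1); positivity
  have hsB : s = 2 * B * (γ - 1) := by
    rw [hB, hs]; field_simp
  set r : ℝ := s ^ ((γ - 1)⁻¹) with hr
  have hr0 : 0 < r := Real.rpow_pos_of_pos hs0 _
  set k₀ : ℝ := max (max 2 (2 * B * A)) r with hk
  have hk2 : (2:ℝ) ≤ k₀ := le_trans (le_max_left 2 _) (le_max_left _ r)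
  have hkBA : 2 * B * A ≤ k₀ := le_trans (le_max_right 2 _) (le_max_left _ r)
  have hkr : r ≤ k₀ := le_max_right _ r
  have hk0 : 0 < k₀ := by linarith
  set C₁ : ℝ := (1 / (γ - 1) + A) * 2 * A with hC1
  set C₂ : ℝ := 2 + A / B with hC2
  have hC10 : 0 < C₁ := by positivity
  have hC20 : 0 < C₂ := by positivity
  refine ⟨C₁ + C₂, by positivity, k₀, by linarith, ?_⟩
  intro w₁ w₂ hw1l hw1r hw2l hw2r v hv
  have hMi : 0 < M⁻¹ := by positivity
  have hw10 : 0 < w₁ := lt_trans hMi hw1l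
  have hw20 : 0 < w₂ := lt_trans hMi hw2l
  have hnegγ : -γ < 0 := by linarith
  have h1γ : 1 - γ < 0 := by linarith
  have hMinv_negγ : (M⁻¹) ^ (-γ) = A := by
    rw [Real.inv_rpow hM0.le, ← Real.rpow_neg hM0.le]; simp [hA]
  have hMinv_1γ : (M⁻¹) ^ (1 - γ) = M ^ (γ - 1) := by
    rw [Real.inv_rpow hM0.le, ← Real.rpow_neg hM0.le]; ring_nf
  have hup1 : w₁ ^ (-γ) < A := by
    calc w₁ ^ (-γ) < (M⁻¹) ^ (-γ) := Real.rpow_lt_rpow_of_neg hMi hw1l hnegγ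
    _ = A := hMinv_negγ
  have hlow2 : A⁻¹ < w₂ ^ (-γ) := by
    have h := Real.rpow_lt_rpow_of_neg hw20 hw2r hnegγ
    have hAi : A⁻¹ = M ^ (-γ) := by rw [hA, ← Real.rpow_neg hM0.le]
    rw [hAi]; exact h
  have hbpos1 : 0 < γ / (γ - 1) * w₁ ^ (1 - γ) := by
    have := Real.rpow_pos_of_pos hw10 (1 - γ); positivity
  have hbpos2 : 0 < γ / (γ - 1) * w₂ ^ (1 - γ) := by
    have := Real.rpow_pos_of_pos hw20 (1 - γ); positivity
  have hbB2 : γ / (γ - 1) * w₂ ^ (1 - γ) < B := by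
    have h := Real.rpow_lt_rpow_of_neg hMi hw2l h1γ
    rw [hMinv_1γ] at h
    have hgp : 0 < γ / (γ - 1) := by positivity
    rw [hB]; nlinarith
  rw [Qrel_eq γ hγ hw10 v, Qrel_eq γ hγ hw20 v]
  rcases hv with ⟨hv0, hvk⟩ | hvk
  · -- small v case
    have hQA := Real.rpow_pos_of_pos hv0 (1 - γ)
    have hQ0 : 0 < Qf γ v := by unfold Qf; positivity
    have hvr : v < r⁻¹ := lt_of_lt_of_le hvk (inv_anti₀ hr0 hkr)
    have hri : (r⁻¹) ^ (1 - γ) = s := by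
      rw [Real.inv_rpow hr0.le, ← Real.rpow_neg hr0.le, hr,
        ← Real.rpow_mul hs0.le]
      rw [show (γ - 1)⁻¹ * -(1 - γ) = 1 by field_simp; ring]
      exact Real.rpow_one s
    have hvs : s < v ^ (1 - γ) := by
      have := Real.rpow_lt_rpow_of_neg hv0 hvr h1γ
      rwa [hri] at this
    have hQ2B : 2 * B < Qf γ v := by
      unfold Qf
      rw [hsB] at hvs
      rw [lt_div_iff₀ hγ1]
      linarith
    have hv1 : v < 1 := by
      have h2i : k₀⁻¹ ≤ 2⁻¹ := inv_anti₀ (by norm_num) hk2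
      have := lt_of_lt_of_le hvk h2i
      linarith
    have h2 : Qf γ v / 2 ≤ Qf γ v + w₂ ^ (-γ) * v - γ / (γ - 1) * w₂ ^ (1 - γ) := by
      have hwv : 0 ≤ w₂ ^ (-γ) * v := by
        have := Real.rpow_pos_of_pos hw20 (-γ); positivity
      linarith
    have h1 : Qf γ v + w₁ ^ (-γ) * v - γ / (γ - 1) * w₁ ^ (1 - γ) ≤ C₂ * (Qf γ v / 2) := by
      have hav : w₁ ^ (-γ) * v ≤ A * 1 := by
        exact mul_le_mul hup1.le hv1.le hv0.le hA0.le
      have hA' : A ≤ A / (2 * B) * Qf γ v := by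
        rw [div_mul_eq_mul_div, le_div_iff₀ (by positivity)]
        linarith [mul_le_mul_of_nonneg_left hQ2B.le hA0.le]
      have hsplit : C₂ * (Qf γ v / 2) = (1 + A / (2 * B)) * Qf γ v := by
        rw [hC2]; field_simp
      rw [hsplit]
      have hexp : (1 + A / (2 * B)) * Qf γ v = Qf γ v + A / (2 * B) * Qf γ v := by ring
      have hA'' : A / (2 * B) * Qf γ v = A / (2 * B) * Qf γ v := rfl
      linarith [hA']
    have hC12 : C₂ * (Qf γ v / 2) ≤
        (C₁ + C₂) * (Qf γ v + w₂ ^ (-γ) * v - γ / (γ - 1) * w₂ ^ (1 - γ)) := by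
      have e1 := mul_le_mul_of_nonneg_left h2 hC20.le
      have e2 : 0 ≤ C₁ * (Qf γ v + w₂ ^ (-γ) * v - γ / (γ - 1) * w₂ ^ (1 - γ)) :=
        mul_nonneg hC10.le (le_trans (by positivity) h2)
      have hexp : (C₁ + C₂) * (Qf γ v + w₂ ^ (-γ) * v - γ / (γ - 1) * w₂ ^ (1 - γ)) =
          C₁ * (Qf γ v + w₂ ^ (-γ) * v - γ / (γ - 1) * w₂ ^ (1 - γ)) +
          C₂ * (Qf γ v + w₂ ^ (-γ) * v - γ / (γ - 1) * w₂ ^ (1 - γ)) := by ring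
      linarith
    linarith
  · -- large v case
    have hv0 : 0 < v := lt_trans hk0 hvk
    have hQ0 : 0 ≤ Qf γ v := div_nonneg (Real.rpow_nonneg hv0.le _) hγ1.le
    have hv1 : 1 < v := by linarith
    have hQ1 : Qf γ v ≤ 1 / (γ - 1) := by
      unfold Qf
      have h : v ^ (1 - γ) ≤ 1 := Real.rpow_le_one_of_one_le_of_nonpos hv1.le h1γ.le
      gcongr
    have hvBA : 2 * B * A < v := lt_of_le_of_lt hkBA hvk
    have hAinv : A * A⁻¹ = 1 := mul_inv_cancel₀ hA0.ne'
    have hBv : B ≤ A⁻¹ * v / 2 := by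
      have hh : 0 ≤ (v - 2 * B * A) * A⁻¹ :=
        mul_nonneg (by linarith) (inv_pos.mpr hA0).le
      have hexp : (v - 2 * B * A) * A⁻¹ = A⁻¹ * v - 2 * B * (A * A⁻¹) := by ring
      rw [hAinv] at hexp
      linarith
    have h2 : A⁻¹ * v / 2 ≤ Qf γ v + w₂ ^ (-γ) * v - γ / (γ - 1) * w₂ ^ (1 - γ) := by
      have hlv : A⁻¹ * v ≤ w₂ ^ (-γ) * v := mul_le_mul_of_nonneg_right hlow2.le hv0.le
      linarith
    have h1 : Qf γ v + w₁ ^ (-γ) * v - γ / (γ - 1) * w₁ ^ (1 - γ) ≤ (1 / (γ - 1) + A) * v := by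
      have hav : w₁ ^ (-γ) * v ≤ A * v := mul_le_mul_of_nonneg_right hup1.le hv0.le
      have hgv : 1 / (γ - 1) ≤ (1 / (γ - 1)) * v := by
        have hp : 0 ≤ (1 / (γ - 1)) * (v - 1) := mul_nonneg (by positivity) (by linarith)
        have he : (1 / (γ - 1)) * (v - 1) = (1 / (γ - 1)) * v - 1 / (γ - 1) := by ring
        linarith
      have hexp : (1 / (γ - 1) + A) * v = (1 / (γ - 1)) * v + A * v := by ring
      linarith
    have key : C₁ * (A⁻¹ * v / 2) = (1 / (γ - 1) + A) * v := by
      rw [hC1]; field_simp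
    have e1 := mul_le_mul_of_nonneg_left h2 hC10.le
    have e2 : 0 ≤ C₂ * (Qf γ v + w₂ ^ (-γ) * v - γ / (γ - 1) * w₂ ^ (1 - γ)) :=
      mul_nonneg hC20.le (le_trans (div_nonneg (mul_nonneg (inv_pos.mpr hA0).le hv0.le) (by norm_num)) h2)
    have hexp : (C₁ + C₂) * (Qf γ v + w₂ ^ (-γ) * v - γ / (γ - 1) * w₂ ^ (1 - γ)) =
        C₁ * (Qf γ v + w₂ ^ (-γ) * v - γ / (γ - 1) * w₂ ^ (1 - γ)) +
        C₂ * (Qf γ v + w₂ ^ (-γ) * v - γ / (γ - 1) * w₂ ^ (1 - γ)) := by ring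
    linarith
end

section
/- Let γ>1 and v₋>0. There exist positive constants C and δ* (depending only on γ and v₋) such that for any 0<δ<δ* and any v,w>0 satisfying |p(v)−p(w)|<δ and |p(w)−p(v₋)|<δ, one has p(v|w) ≤ ( (γ+1)/(2γ) · 1/p(w) + Cδ ) · |p(v)−p(w)|². -/
open Set

/-- Relative pressure `p(v|w) = p(v) - p(w) - p'(w)(v-w)`, where `p'(w) = -γ w^(-γ-1)`. -/
noncomputable def prel (γ v w : ℝ) : ℝ := pres γ v - pres γ w + γ * w ^ (-γ - 1) * (v - w)


private lemma rpow_sub_rpow_le {a b r : ℝ} (hb : 0 < b) (hba : b ≤ a) (hr : 1 ≤ r) :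
    a ^ r - b ^ r ≤ r * a ^ (r - 1) * (a - b) := by
  rcases eq_or_lt_of_le hba with h | h
  · subst h; simp
  · have ha : 0 < a := hb.trans h
    obtain ⟨c, hc, hceq⟩ := exists_hasDerivAt_eq_slope (fun x => x ^ r)
      (fun x => r * x ^ (r - 1)) h
      (fun x hx => (Real.continuousAt_rpow_const x r
        (Or.inl (hb.trans_le hx.1).ne')).continuousWithinAt)
      (fun x hx => Real.hasDerivAt_rpow_const (Or.inl (hb.trans hx.1).ne'))
    have hc0 : 0 < c := hb.trans hc.1
    have hab : a - b ≠ 0 := by linarith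
    have h1 : a ^ r - b ^ r = r * c ^ (r - 1) * (a - b) := by
      field_simp at hceq
      linarith [hceq]
    rw [h1]
    have h2 : c ^ (r - 1) ≤ a ^ (r - 1) :=
      Real.rpow_le_rpow hc0.le hc.2.le (by linarith)
    have hr0 : (0:ℝ) < r := by linarith
    have hab0 : (0:ℝ) ≤ a - b := by linarith
    have := mul_le_mul_of_nonneg_right (mul_le_mul_of_nonneg_left h2 hr0.le) hab0
    linarith

private lemma quad_bound {g g' g'' : ℝ → ℝ} {a b Q P K : ℝ}
    (hQ : Q ∈ Icc a b) (hP : P ∈ Icc a b)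
    (hgQ : g Q = 0) (hg'Q : g' Q = 0)
    (hder : ∀ x ∈ Icc a b, HasDerivAt g (g' x) x)
    (hder' : ∀ x ∈ Icc a b, HasDerivAt g' (g'' x) x)
    (hbound : ∀ x ∈ Icc a b, g'' x ≤ 2 * K) :
    g P ≤ K * (P - Q) ^ 2 := by
  set h : ℝ → ℝ := fun x => g x - K * (x - Q) ^ 2 with hh
  set h' : ℝ → ℝ := fun x => g' x - K * (2 * (x - Q)) with hh'
  have hdh : ∀ x ∈ Icc a b, HasDerivAt h (h' x) x := by
    intro x hx
    have h1 : HasDerivAt (fun x : ℝ => (x - Q) ^ 2) (2 * (x - Q)) x := by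
      have := ((hasDerivAt_id x).sub_const Q).fun_pow 2
      simpa using this
    exact (hder x hx).sub (h1.const_mul K)
  have hdh' : ∀ x ∈ Icc a b, HasDerivAt h' (g'' x - 2 * K) x := by
    intro x hx
    have h1 : HasDerivAt (fun x : ℝ => 2 * (x - Q)) 2 x := by
      simpa using ((hasDerivAt_id x).sub_const Q).const_mul 2
    have h2 := (hder' x hx).sub (h1.const_mul K)
    have h3 : g'' x - 2 * K = g'' x - K * 2 := by ring
    rw [h3]
    exact h2
  have hc' : ContinuousOn h' (Icc a b) := fun x hx =>
    ((hdh' x hx).continuousAt).continuousWithinAt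
  have hanti : AntitoneOn h' (Icc a b) := by
    apply antitoneOn_of_deriv_nonpos (convex_Icc a b) hc'
    · intro x hx
      rw [interior_Icc] at hx
      exact ((hdh' x (Ioo_subset_Icc_self hx)).differentiableAt).differentiableWithinAt
    · intro x hx
      rw [interior_Icc] at hx
      rw [(hdh' x (Ioo_subset_Icc_self hx)).deriv]
      linarith [hbound x (Ioo_subset_Icc_self hx)]
  have hh'Q : h' Q = 0 := by simp [hh', hg'Q]
  have key : h P ≤ 0 := by
    rcases le_total Q P with hQP | hPQ
    · have hsub : Icc Q P ⊆ Icc a b := Icc_subset_Icc hQ.1 hP.2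
      have hmono : AntitoneOn h (Icc Q P) := by
        apply antitoneOn_of_deriv_nonpos (convex_Icc Q P)
          (fun x hx => ((hdh x (hsub hx)).continuousAt).continuousWithinAt)
        · intro x hx
          rw [interior_Icc] at hx
          exact ((hdh x (hsub (Ioo_subset_Icc_self hx))).differentiableAt).differentiableWithinAt
        · intro x hx
          rw [interior_Icc] at hx
          rw [(hdh x (hsub (Ioo_subset_Icc_self hx))).deriv]
          have := hanti hQ (hsub (Ioo_subset_Icc_self hx)) hx.1.le
          linarith
      have := hmono (left_mem_Icc.2 hQP) (right_mem_Icc.2 hQP) hQP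
      simpa [hh, hgQ] using this
    · have hsub : Icc P Q ⊆ Icc a b := Icc_subset_Icc hP.1 hQ.2
      have hmono : MonotoneOn h (Icc P Q) := by
        apply monotoneOn_of_deriv_nonneg (convex_Icc P Q)
          (fun x hx => ((hdh x (hsub hx)).continuousAt).continuousWithinAt)
        · intro x hx
          rw [interior_Icc] at hx
          exact ((hdh x (hsub (Ioo_subset_Icc_self hx))).differentiableAt).differentiableWithinAt
        · intro x hx
          rw [interior_Icc] at hx
          rw [(hdh x (hsub (Ioo_subset_Icc_self hx))).deriv]
          have := hanti (hsub (Ioo_subset_Icc_self hx)) hQ hx.2.le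
          linarith
      have := hmono (left_mem_Icc.2 hPQ) (right_mem_Icc.2 hPQ) hPQ
      simpa [hh, hgQ] using this
  have : g P - K * (P - Q) ^ 2 ≤ 0 := key
  linarith

set_option maxHeartbeats 1600000 in
theorem stmt7 (γ vm : ℝ) (hγ : 1 < γ) (hvm : 0 < vm) :
    ∃ C > (0 : ℝ), ∃ δs > (0 : ℝ), ∀ δ : ℝ, 0 < δ → δ < δs → ∀ v w : ℝ, 0 < v → 0 < w →
      |pres γ v - pres γ w| < δ → |pres γ w - pres γ vm| < δ →
      prel γ v w ≤ ((γ + 1) / (2 * γ) * (1 / pres γ w) + C * δ) * |pres γ v - pres γ w| ^ 2 := by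
  have hγ0 : (0:ℝ) < γ := by linarith
  have hγinv : (0:ℝ) < 1/γ := by positivity
  set p0 : ℝ := vm ^ (-γ) with hp0def
  have hp0 : 0 < p0 := Real.rpow_pos_of_pos hvm _
  set c : ℝ := (γ + 1) / γ with hcdef
  have hc0 : 0 < c := by positivity
  set C : ℝ := (1/γ + 1) * (2*p0) ^ c * (1/γ + 2) / ((p0/2) ^ (1/γ + 2) * (p0/2)) with hCdef
  have hC : 0 < C := by positivity
  refine ⟨C, hC, p0/4, by positivity, ?_⟩
  intro δ hδ0 hδs v w hv hw h1 h2
  simp only [pres] at h1 h2 ⊢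
  rw [← hp0def] at h2
  set e : ℝ := -(1/γ) with hedef
  set s : ℝ := 1/γ + 2 with hsdef
  have hs1 : (1:ℝ) ≤ s := by rw [hsdef]; linarith
  set P : ℝ := v ^ (-γ) with hPdef
  set Q : ℝ := w ^ (-γ) with hQdef
  have hPpos : 0 < P := Real.rpow_pos_of_pos hv _
  have hQpos : 0 < Q := Real.rpow_pos_of_pos hw _
  have hb1 := abs_lt.mp h1
  have hb2 := abs_lt.mp h2
  have hδp : δ < p0/4 := hδs
  have hQlb : p0/2 < Q := by linarith [hb2.1]
  have hQub : Q < 2*p0 := by linarith [hb2.2]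
  have hPlb : p0/2 < P := by linarith [hb1.1, hb2.1]
  set a : ℝ := min P Q with hadef
  set b : ℝ := max P Q with hbdef
  have ha : p0/2 < a := lt_min hPlb hQlb
  have haQδ : Q - δ < a := lt_min (by linarith [hb1.1]) (by linarith)
  have hQmem : Q ∈ Icc a b := ⟨min_le_right _ _, le_max_right _ _⟩
  have hPmem : P ∈ Icc a b := ⟨min_le_left _ _, le_max_left _ _⟩
  set g : ℝ → ℝ := fun x => x - Q + γ * Q ^ c * (x ^ e - Q ^ e) with hgdef
  set g' : ℝ → ℝ := fun x => 1 + γ * Q ^ c * (e * x ^ (e - 1)) with hg'def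
  set g'' : ℝ → ℝ := fun x => γ * Q ^ c * (e * ((e - 1) * x ^ (e - 1 - 1))) with hg''def
  set K : ℝ := (γ + 1) / (2 * γ) * (1 / Q) + C * δ with hKdef
  have hxpos : ∀ x ∈ Icc a b, 0 < x := fun x hx =>
    lt_of_lt_of_le (lt_trans (by linarith) ha) hx.1
  have hγne : γ ≠ 0 := hγ0.ne'
  have hQne : Q ≠ 0 := hQpos.ne'
  clear_value P Q a b g g' g'' K C p0 c e s
  have hder : ∀ x ∈ Icc a b, HasDerivAt g (g' x) x := by
    intro x hx
    have hx0 : x ≠ 0 := (hxpos x hx).ne'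
    have hrp : HasDerivAt (fun y : ℝ => y ^ e) (e * x ^ (e - 1)) x :=
      Real.hasDerivAt_rpow_const (Or.inl hx0)
    rw [hgdef, hg'def]
    exact ((hasDerivAt_id x).sub_const Q).add ((hrp.sub_const (Q ^ e)).const_mul (γ * Q ^ c))
  have hder' : ∀ x ∈ Icc a b, HasDerivAt g' (g'' x) x := by
    intro x hx
    have hx0 : x ≠ 0 := (hxpos x hx).ne'
    have hrp : HasDerivAt (fun y : ℝ => y ^ (e - 1)) ((e - 1) * x ^ (e - 1 - 1)) x :=
      Real.hasDerivAt_rpow_const (Or.inl hx0)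
    rw [hg'def, hg''def]
    exact (((hrp.const_mul e).const_mul (γ * Q ^ c)).const_add 1)
  have hgQ : g Q = 0 := by simp [hgdef]
  have hγe : γ * e = -1 := by rw [hedef]; field_simp
  have hg'Q : g' Q = 0 := by
    have hQce : Q ^ c * Q ^ (e - 1) = 1 := by
      rw [← Real.rpow_add hQpos]
      have h : c + (e - 1) = 0 := by rw [hcdef, hedef]; field_simp; ring
      rw [h, Real.rpow_zero]
    have h4 : g' Q = 1 + (γ * e) * (Q ^ c * Q ^ (e - 1)) := by rw [hg'def]; ring
    rw [h4, hγe, hQce]; ring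
  have hbound : ∀ x ∈ Icc a b, g'' x ≤ 2 * K := by
    intro x hx
    have hx0 : 0 < x := hxpos x hx
    have hxp2 : p0/2 < x := lt_of_lt_of_le ha hx.1
    have hes : e - 1 - 1 = -s := by rw [hedef, hsdef]; ring
    have hxs : 0 < x ^ s := Real.rpow_pos_of_pos hx0 s
    have hQs : 0 < Q ^ s := Real.rpow_pos_of_pos hQpos s
    have hQc : 0 < Q ^ c := Real.rpow_pos_of_pos hQpos c
    have hgx : g'' x = (1/γ + 1) * (Q ^ c * (x ^ s)⁻¹) := by
      rw [hg''def]
      simp only []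
      rw [hes, Real.rpow_neg hx0.le]
      have h5 : γ * (e * (e - 1)) = 1/γ + 1 := by rw [hedef]; field_simp; ring
      linear_combination (Q ^ c * (x ^ s)⁻¹) * h5
    have hQcs : Q ^ c * (Q ^ s)⁻¹ = 1 / Q := by
      rw [← Real.rpow_neg hQpos.le, ← Real.rpow_add hQpos]
      have h : c + -s = -1 := by rw [hcdef, hsdef]; field_simp; ring
      rw [h, Real.rpow_neg_one, one_div]
    have h2K : 2 * K = (1/γ + 1) * (1 / Q) + 2 * (C * δ) := by
      rw [hKdef]; field_simp; ring
    have h1γ : (0:ℝ) < 1/γ + 1 := by linarith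
    rcases le_total Q x with hQx | hxQ
    · have hmono : Q ^ s ≤ x ^ s := Real.rpow_le_rpow hQpos.le hQx (by linarith)
      have hinv : (x ^ s)⁻¹ ≤ (Q ^ s)⁻¹ := inv_anti₀ hQs hmono
      have h6 : Q ^ c * (x ^ s)⁻¹ ≤ 1 / Q := by
        calc Q ^ c * (x ^ s)⁻¹ ≤ Q ^ c * (Q ^ s)⁻¹ :=
              mul_le_mul_of_nonneg_left hinv hQc.le
          _ = 1 / Q := hQcs
      rw [hgx, h2K]
      have h7 := mul_le_mul_of_nonneg_left h6 h1γ.le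
      linarith [mul_pos hC hδ0]
    · have hxQδ : Q - x < δ := by
        have := lt_of_lt_of_le haQδ hx.1
        linarith
      have h3 : Q ^ s - x ^ s ≤ s * Q ^ (s - 1) * (Q - x) := rpow_sub_rpow_le hx0 hxQ hs1
      have hQs1 : 0 < Q ^ (s - 1) := Real.rpow_pos_of_pos hQpos _
      have hsQ : 0 ≤ s * Q ^ (s - 1) := mul_nonneg (by linarith) hQs1.le
      have h4 : Q ^ s - x ^ s ≤ s * Q ^ (s - 1) * δ := by
        have := mul_le_mul_of_nonneg_left hxQδ.le hsQ
        linarith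
      have hQss : Q ^ (s - 1) * Q = Q ^ s := by
        rw [← Real.rpow_add_one hQpos.ne' (s - 1)]; congr 1; ring
      have hm : 0 < (p0/2) ^ s := Real.rpow_pos_of_pos (by linarith) s
      have h5 : (p0/2) ^ s ≤ x ^ s := Real.rpow_le_rpow (by linarith) hxp2.le (by linarith)
      have hD : 0 < (p0/2) ^ s * (p0/2) := mul_pos hm (by linarith)
      have hdiff : (x ^ s)⁻¹ - (Q ^ s)⁻¹ ≤ s * δ / ((p0/2) ^ s * (p0/2)) := by
        rw [inv_sub_inv hxs.ne' hQs.ne', div_le_div_iff₀ (mul_pos hxs hQs) hD]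
        have hDle : (p0/2) ^ s * (p0/2) ≤ x ^ s * Q := mul_le_mul h5 hQlb.le (by linarith) hxs.le
        have key2 : s * Q ^ (s - 1) * δ * (x ^ s * Q) = s * δ * (x ^ s * Q ^ s) := by
          rw [← hQss]; ring
        have hsQδ : (0:ℝ) ≤ s * Q ^ (s - 1) * δ := mul_nonneg hsQ hδ0.le
        have c1 := mul_le_mul_of_nonneg_right h4 hD.le
        have c2 := mul_le_mul_of_nonneg_left hDle hsQδ
        exact le_trans c1 (le_trans c2 (le_of_eq key2))
      have hdiffnn : 0 ≤ (x ^ s)⁻¹ - (Q ^ s)⁻¹ := by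
        have hmono : x ^ s ≤ Q ^ s := Real.rpow_le_rpow hx0.le hxQ (by linarith)
        have := inv_anti₀ hxs hmono
        linarith
      have hQc2p : Q ^ c ≤ (2*p0) ^ c := Real.rpow_le_rpow hQpos.le hQub.le hc0.le
      have t1 : Q ^ c * ((x ^ s)⁻¹ - (Q ^ s)⁻¹) ≤ (2*p0) ^ c * (s * δ / ((p0/2) ^ s * (p0/2))) :=
        mul_le_mul hQc2p hdiff hdiffnn (Real.rpow_pos_of_pos (by linarith) c).le
      have hCδ : (1/γ + 1) * ((2*p0) ^ c * (s * δ / ((p0/2) ^ s * (p0/2)))) = C * δ := by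
        rw [hCdef]; ring
      rw [hgx, h2K]
      have t3 := mul_le_mul_of_nonneg_left t1 h1γ.le
      rw [hCδ] at t3
      have hCδ0 : 0 ≤ C * δ := le_of_lt (mul_pos hC hδ0)
      calc (1/γ + 1) * (Q ^ c * (x ^ s)⁻¹)
          = (1/γ + 1) * (Q ^ c * (Q ^ s)⁻¹) + (1/γ + 1) * (Q ^ c * ((x ^ s)⁻¹ - (Q ^ s)⁻¹)) := by
            ring
        _ ≤ (1/γ + 1) * (1 / Q) + C * δ := by rw [hQcs]; linarith
        _ ≤ (1/γ + 1) * (1 / Q) + 2 * (C * δ) := by linarith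
  have hmain := quad_bound hQmem hPmem hgQ hg'Q hder hder' hbound
  have hPe : P ^ e = v := by
    rw [hPdef, ← Real.rpow_mul hv.le]
    have h6 : -γ * e = 1 := by rw [hedef]; field_simp
    rw [h6, Real.rpow_one]
  have hQe : Q ^ e = w := by
    rw [hQdef, ← Real.rpow_mul hw.le]
    have h6 : -γ * e = 1 := by rw [hedef]; field_simp
    rw [h6, Real.rpow_one]
  have hQc2 : Q ^ c = w ^ (-γ - 1) := by
    rw [hQdef, ← Real.rpow_mul hw.le]
    congr 1
    rw [hcdef]; field_simp; ring
  have hprel : prel γ v w = g P := by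
    have hg : g P = P - Q + γ * Q ^ c * (P ^ e - Q ^ e) := by rw [hgdef]
    rw [hPe, hQe, hQc2] at hg
    rw [hg]
    simp only [prel, pres, hPdef, hQdef]
  rw [hprel, sq_abs]
  exact hmain
end

section
/- Let γ>1 and v₋>0. There exist positive constants C and δ* (depending only on γ and v₋) such that for any 0<δ<δ* and any v,w>0 satisfying |p(w)−p(v₋)| ≤ δ and, in addition, either Q(v|w) < δ or |p(v)−p(w)| < δ, one has |p(v)−p(w)|² ≤ C·Q(v|w). -/
section aux
variable {γ vm : ℝ} (hγ : 1 < γ)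

lemma pres_pos {v : ℝ} (hv : 0 < v) : 0 < pres γ v := Real.rpow_pos_of_pos hv _

lemma pres_anti {v w : ℝ} (hv : 0 < v) (hvw : v ≤ w) (hγ : 1 < γ) :
    pres γ w ≤ pres γ v :=
  Real.rpow_le_rpow_of_nonpos hv hvw (by linarith)

lemma pres_anti' {v w : ℝ} (hw : 0 < w) (hγ : 1 < γ) (h : pres γ w < pres γ v) : v < w := by
  by_contra hc
  exact absurd (pres_anti hw (not_lt.mp hc) hγ) (not_le.mpr h)

lemma hasDerivAt_pres {v : ℝ} (hv : 0 < v) :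
    HasDerivAt (fun x => pres γ x) (-γ * v ^ (-γ - 1)) v := by
  simpa [pres] using Real.hasDerivAt_rpow_const (p := -γ) (Or.inl hv.ne')

lemma hasDerivAt_Qrel (hγ : 1 < γ) {v : ℝ} (hv : 0 < v) (w : ℝ) :
    HasDerivAt (fun x => Qrel γ x w) (pres γ w - pres γ v) v := by
  have h1 : HasDerivAt (fun x : ℝ => x ^ (1 - γ)) ((1 - γ) * v ^ (1 - γ - 1)) v :=
    Real.hasDerivAt_rpow_const (p := 1 - γ) (Or.inl hv.ne')
  have h2 : HasDerivAt (fun x => Qf γ x) (-(v ^ (-γ))) v := by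
    have := h1.div_const (γ - 1)
    have hne : γ - 1 ≠ 0 := by linarith
    refine this.congr_deriv (Eq.symm ?_)
    have : 1 - γ - 1 = -γ := by ring
    rw [this]
    field_simp
    ring
  have h3 := (h2.sub_const (Qf γ w)).add (((hasDerivAt_id v).sub_const w).const_mul (pres γ w))
  refine h3.congr_deriv (Eq.symm ?_)
  simp [pres]
  ring
end aux

lemma Qrel_self (γ w : ℝ) : Qrel γ w w = 0 := by simp [Qrel]

lemma hasDerivAt_F {γ : ℝ} (hγ : 1 < γ) (C w : ℝ) {x : ℝ} (hx : 0 < x) :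
    HasDerivAt (fun y => C * Qrel γ y w - (pres γ y - pres γ w) ^ 2)
      ((pres γ w - pres γ x) * (C - 2 * γ * x ^ (-γ - 1))) x := by
  have h1 := (hasDerivAt_Qrel hγ hx w).const_mul C
  have h2 := ((hasDerivAt_pres (γ := γ) hx).sub_const (pres γ w)).pow 2
  refine (h1.sub h2).congr_deriv (Eq.symm ?_)
  push_cast
  ring

/-- Core inequality: for `v, w ≥ a > 0`, `(p v - p w)^2 ≤ C · Qrel` with `C = 2γ a^(-γ-1)`. -/
lemma coreA {γ : ℝ} (hγ : 1 < γ) {a v w : ℝ} (ha : 0 < a) (hav : a ≤ v) (haw : a ≤ w) :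
    (pres γ v - pres γ w) ^ 2 ≤ (2 * γ * a ^ (-γ - 1)) * Qrel γ v w := by
  set C := 2 * γ * a ^ (-γ - 1) with hCdef
  set F := fun y => C * Qrel γ y w - (pres γ y - pres γ w) ^ 2 with hF
  have hFw : F w = 0 := by simp [hF, Qrel_self]
  have hfac : ∀ x : ℝ, a ≤ x → 0 ≤ C - 2 * γ * x ^ (-γ - 1) := by
    intro x hx
    have : x ^ (-γ - 1) ≤ a ^ (-γ - 1) :=
      Real.rpow_le_rpow_of_nonpos ha hx (by linarith)
    have hγ0 : (0:ℝ) < γ := by linarith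
    nlinarith
  have key : 0 ≤ F v := by
    rcases lt_trichotomy v w with h | h | h
    · have hcont : ContinuousOn F (Set.Icc v w) := by
        intro x hx
        exact ((hasDerivAt_F hγ C w (lt_of_lt_of_le ha (le_trans hav hx.1))).continuousAt).continuousWithinAt
      obtain ⟨c, hc, hceq⟩ := exists_hasDerivAt_eq_slope F
        (fun x => (pres γ w - pres γ x) * (C - 2 * γ * x ^ (-γ - 1))) h hcont
        (fun x hx => hasDerivAt_F hγ C w (lt_of_lt_of_le ha (le_trans hav hx.1.le)))
      have hca : a ≤ c := le_trans hav hc.1.le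
      have hc0 : 0 < c := lt_of_lt_of_le ha hca
      have hsign : pres γ w - pres γ c ≤ 0 := by
        have := pres_anti hc0 hc.2.le hγ
        linarith
      have hder : (pres γ w - pres γ c) * (C - 2 * γ * c ^ (-γ - 1)) ≤ 0 :=
        mul_nonpos_of_nonpos_of_nonneg hsign (hfac c hca)
      rw [hceq, hFw] at hder
      have hvw : 0 < w - v := by linarith
      have := (div_nonpos_iff.mp hder)
      rcases this with ⟨h1, _⟩ | ⟨h1, h2⟩
      · linarith
      · linarith
    · simp [h, hFw]
    · have hcont : ContinuousOn F (Set.Icc w v) := by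
        intro x hx
        exact ((hasDerivAt_F hγ C w (lt_of_lt_of_le ha (le_trans haw hx.1))).continuousAt).continuousWithinAt
      obtain ⟨c, hc, hceq⟩ := exists_hasDerivAt_eq_slope F
        (fun x => (pres γ w - pres γ x) * (C - 2 * γ * x ^ (-γ - 1))) h hcont
        (fun x hx => hasDerivAt_F hγ C w (lt_of_lt_of_le ha (le_trans haw hx.1.le)))
      have hca : a ≤ c := le_trans haw hc.1.le
      have hc0 : 0 < c := lt_of_lt_of_le ha hca
      have hw0 : 0 < w := lt_of_lt_of_le ha haw
      have hsign : 0 ≤ pres γ w - pres γ c := by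
        have := pres_anti hw0 hc.1.le hγ
        linarith
      have hder : 0 ≤ (pres γ w - pres γ c) * (C - 2 * γ * c ^ (-γ - 1)) :=
        mul_nonneg hsign (hfac c hca)
      rw [hceq, hFw] at hder
      have hvw : 0 < v - w := by linarith
      rcases div_nonneg_iff.mp hder with ⟨h1, _⟩ | ⟨h1, h2⟩
      · linarith
      · linarith
  simp only [hF] at key
  linarith

/-- `v ↦ Qrel γ v w` is decreasing on `(0, w]`. -/
lemma Qrel_anti {γ : ℝ} (hγ : 1 < γ) {v v' w : ℝ} (hv : 0 < v) (h1 : v < v') (h2 : v' ≤ w) :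
    Qrel γ v' w ≤ Qrel γ v w := by
  have hcont : ContinuousOn (fun x => Qrel γ x w) (Set.Icc v v') := by
    intro x hx
    exact ((hasDerivAt_Qrel hγ (lt_of_lt_of_le hv hx.1) w).continuousAt).continuousWithinAt
  obtain ⟨c, hc, hceq⟩ := exists_hasDerivAt_eq_slope (fun x => Qrel γ x w)
    (fun x => pres γ w - pres γ x) h1 hcont
    (fun x hx => hasDerivAt_Qrel hγ (lt_of_lt_of_le hv hx.1.le) w)
  have hc0 : 0 < c := lt_of_le_of_lt hv.le hc.1
  have hsign : pres γ w - pres γ c ≤ 0 := by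
    have := pres_anti hc0 (le_trans hc.2.le h2) hγ
    linarith
  rw [hceq] at hsign
  have hvv : 0 < v' - v := by linarith
  rcases div_nonpos_iff.mp hsign with ⟨hA, _⟩ | ⟨hA, hB⟩
  · linarith
  · linarith

theorem stmt8 (γ vm : ℝ) (hγ : 1 < γ) (hvm : 0 < vm) :
    ∃ C > (0 : ℝ), ∃ δs > (0 : ℝ), ∀ δ : ℝ, 0 < δ → δ < δs → ∀ v w : ℝ, 0 < v → 0 < w →
      |pres γ w - pres γ vm| ≤ δ →
      (Qrel γ v w < δ ∨ |pres γ v - pres γ w| < δ) →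
      |pres γ v - pres γ w| ^ 2 ≤ C * Qrel γ v w := by
  have hγ0 : (0:ℝ) < γ := by linarith
  set ps := pres γ vm with hps
  have hps0 : 0 < ps := pres_pos hvm
  set a : ℝ := (3 / 2 * ps) ^ (-1 / γ) with hadef
  have h32 : (0:ℝ) < 3 / 2 * ps := by linarith
  have ha : 0 < a := Real.rpow_pos_of_pos h32 _
  have hpa : pres γ a = 3 / 2 * ps := by
    rw [pres, hadef, ← Real.rpow_mul h32.le]
    rw [show -1 / γ * -γ = 1 by field_simp]
    exact Real.rpow_one _
  set C : ℝ := 2 * γ * a ^ (-γ - 1) with hCdef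
  have hC : 0 < C := by
    have := Real.rpow_pos_of_pos ha (-γ - 1)
    positivity
  set m : ℝ := (ps / 4) ^ 2 / C with hmdef
  have hm : 0 < m := by positivity
  refine ⟨C, hC, min (ps / 4) m, lt_min (by positivity) hm, ?_⟩
  intro δ hδ hδs v w hv hw hpw hyp
  have hδ1 : δ < ps / 4 := lt_of_lt_of_le hδs (min_le_left _ _)
  have hδ2 : δ < m := lt_of_lt_of_le hδs (min_le_right _ _)
  obtain ⟨hwl, hwr⟩ := abs_le.mp hpw
  -- pres γ w ∈ (3/4 ps, 5/4 ps)
  have hw1 : 3 / 4 * ps < pres γ w := by linarith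
  have hw2 : pres γ w < 5 / 4 * ps := by linarith
  have haw : a < w := by
    apply pres_anti' hw hγ
    rw [hpa]; linarith
  -- establish a ≤ v
  have hav : a ≤ v := by
    rcases hyp with hQ | hP
    · by_contra hc
      push_neg at hc
      have h1 : Qrel γ a w ≤ Qrel γ v w := Qrel_anti hγ hv hc haw.le
      have h2 : (pres γ a - pres γ w) ^ 2 ≤ C * Qrel γ a w := coreA hγ ha le_rfl haw.le
      have h3 : ps / 4 ≤ pres γ a - pres γ w := by rw [hpa]; linarith
      have h4 : (ps / 4) ^ 2 ≤ (pres γ a - pres γ w) ^ 2 :=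
        pow_le_pow_left₀ (by positivity) h3 2
      have h5 : m ≤ Qrel γ a w := by
        rw [hmdef, div_le_iff₀ hC]
        nlinarith
      linarith
    · -- |p v - p w| < δ forces p v < 3/2 ps = p a, hence a < v
      have : pres γ v < 3 / 2 * ps := by
        have := (abs_lt.mp hP).2
        linarith
      exact (pres_anti' hv hγ (by rw [hpa]; linarith)).le
  calc |pres γ v - pres γ w| ^ 2 = (pres γ v - pres γ w) ^ 2 := sq_abs _
    _ ≤ C * Qrel γ v w := coreA hγ ha hav haw.le
end

section
/- (Tail estimates for small viscous shocks.) Fix γ>1 and α>0 with α ≤ γ ≤ α+1, set β:=γ−α, and fix v₋>0 and u₋∈ℝ. There exist ε₀>0 and constants C, C₁, C₂>0 (depending only on γ, α, v₋) such that the following holds for every 0<ε<ε₀. Let v₊∈(0,v₋) be such that |p(v₋)−p(v₊)|=ε, let σ := −√( −(p(v₊)−p(v₋))/(v₊−v₋) ), and let u₊ := u₋ − σ(v₊−v₋). Suppose ṽ:ℝ→(0,∞) is twice continuously differentiable and h̃:ℝ→ℝ is continuously differentiable, and that for all ξ∈ℝ: −σ·ṽ'(ξ) − h̃'(ξ) =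 −( ṽ^β·(p∘ṽ)' )'(ξ) and −σ·h̃'(ξ) + (p∘ṽ)'(ξ) = 0, together with the limits ṽ(ξ)→v₋, h̃(ξ)→u₋ as ξ→−∞, ṽ(ξ)→v₊, h̃(ξ)→u₊ as ξ→+∞, ṽ'(ξ)→0 as ξ→±∞, and the normalization ṽ(0)=(v₋+v₊)/2. Then for all ξ∈ℝ: −C⁻¹·ε²·e^{−C₁·ε·|ξ|} ≤ ṽ'(ξ) ≤ −C·ε²·e^{−C₂·ε·|ξ|}; in particular, inf over ξ∈[−1/ε, 1/ε] of |ṽ'(ξ)| is at least C·ε². -/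
open Real Set Filter Topology

noncomputable def qf (q c vp vm γ : ℝ) : ℝ → ℝ :=
  fun x => q * x + x ^ (-γ) + c * ((x - vp) * (vm - x))

lemma qf_hasDerivAt (q c vp vm γ : ℝ) {x : ℝ} (hx : 0 < x) :
    HasDerivAt (qf q c vp vm γ) (q + -γ * x ^ (-γ - 1) + c * (vm + vp - 2 * x)) x := by
  have h2 := Real.hasDerivAt_rpow_const (x := x) (p := -γ) (Or.inl hx.ne')
  have h3 : HasDerivAt (fun x : ℝ => (x - vp) * (vm - x)) (1 * (vm - x) + (x - vp) * (0 - 1)) x :=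
    ((hasDerivAt_id x).sub_const vp).mul ((hasDerivAt_const x vm).sub (hasDerivAt_id x))
  have h1 : HasDerivAt (fun x : ℝ => q * x) (q * 1) x := (hasDerivAt_id x).const_mul q
  have := (h1.add h2).add (h3.const_mul c)
  exact this.congr_deriv (by ring)

lemma qf'_hasDerivAt (q c vp vm γ : ℝ) {x : ℝ} (hx : 0 < x) :
    HasDerivAt (fun x : ℝ => q + -γ * x ^ (-γ - 1) + c * (vm + vp - 2 * x))
      (γ * (γ + 1) * x ^ (-γ - 2) - 2 * c) x := by
  have h2 := (Real.hasDerivAt_rpow_const (x := x) (p := -γ - 1) (Or.inl hx.ne')).const_mul (-γ)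
  have h3 : HasDerivAt (fun x : ℝ => vm + vp - 2 * x) (0 - 2 * 1) x :=
    (hasDerivAt_const x (vm + vp)).sub ((hasDerivAt_id x).const_mul 2)
  have := ((hasDerivAt_const x q).add h2).add (h3.const_mul c)
  exact this.congr_deriv (by rw [show (-γ - 1 - 1 : ℝ) = -γ - 2 by ring]; ring)

lemma qf_deriv2 (q c vp vm γ : ℝ) {y : ℝ} (hy : 0 < y) :
    deriv^[2] (qf q c vp vm γ) y = γ * (γ + 1) * y ^ (-γ - 2) - 2 * c := by
  have hev : deriv (qf q c vp vm γ) =ᶠ[𝓝 y]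
      (fun x => q + -γ * x ^ (-γ - 1) + c * (vm + vp - 2 * x)) := by
    filter_upwards [isOpen_Ioi.mem_nhds hy] with z hz
    exact (qf_hasDerivAt q c vp vm γ hz).deriv
  have : deriv^[2] (qf q c vp vm γ) y = deriv (deriv (qf q c vp vm γ)) y := by
    simp [Function.iterate_succ_apply', Function.iterate_one]
  rw [this, hev.deriv_eq, (qf'_hasDerivAt q c vp vm γ hy).deriv]

lemma qf_diffOn (q c vp vm γ : ℝ) {vp' vm' : ℝ} (hvp : 0 < vp') :
    DifferentiableOn ℝ (qf q c vp vm γ) (Icc vp' vm') := by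
  intro y hy
  exact ((qf_hasDerivAt q c vp vm γ (lt_of_lt_of_le hvp hy.1)).differentiableAt).differentiableWithinAt

lemma qf_deriv_diffOn (q c vp vm γ : ℝ) {vp' vm' : ℝ} (hvp : 0 < vp') :
    DifferentiableOn ℝ (deriv (qf q c vp vm γ)) (Icc vp' vm') := by
  intro y hy
  have hy0 : 0 < y := lt_of_lt_of_le hvp hy.1
  have hev : (fun x => q + -γ * x ^ (-γ - 1) + c * (vm + vp - 2 * x)) =ᶠ[𝓝 y]
      deriv (qf q c vp vm γ) := by
    filter_upwards [isOpen_Ioi.mem_nhds hy0] with z hz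
    exact ((qf_hasDerivAt q c vp vm γ hz).deriv).symm
  exact (((qf'_hasDerivAt q c vp vm γ hy0).differentiableAt).congr_of_eventuallyEq hev.symm).differentiableWithinAt

lemma qf_le_max (q c vp vm γ : ℝ) (hvp : 0 < vp) (hlt : vp < vm)
    (hc : ∀ x ∈ Icc vp vm, 2 * c ≤ γ * (γ + 1) * x ^ (-γ - 2)) :
    ∀ x ∈ Icc vp vm, qf q c vp vm γ x ≤ max (qf q c vp vm γ vp) (qf q c vp vm γ vm) := by
  have hconv : ConvexOn ℝ (Icc vp vm) (qf q c vp vm γ) := by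
    apply convexOn_of_deriv2_nonneg' (convex_Icc _ _) (qf_diffOn q c vp vm γ hvp)
      (qf_deriv_diffOn q c vp vm γ hvp)
    intro x hx
    rw [qf_deriv2 q c vp vm γ (lt_of_lt_of_le hvp hx.1)]
    linarith [hc x hx]
  intro x hx
  exact hconv.le_on_segment (left_mem_Icc.2 hlt.le) (right_mem_Icc.2 hlt.le)
    ((segment_eq_Icc hlt.le).symm ▸ hx)

lemma qf_ge_min (q c vp vm γ : ℝ) (hvp : 0 < vp) (hlt : vp < vm)
    (hc : ∀ x ∈ Icc vp vm, γ * (γ + 1) * x ^ (-γ - 2) ≤ 2 * c) :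
    ∀ x ∈ Icc vp vm, min (qf q c vp vm γ vp) (qf q c vp vm γ vm) ≤ qf q c vp vm γ x := by
  have hconc : ConcaveOn ℝ (Icc vp vm) (qf q c vp vm γ) := by
    apply concaveOn_of_deriv2_nonpos' (convex_Icc _ _) (qf_diffOn q c vp vm γ hvp)
      (qf_deriv_diffOn q c vp vm γ hvp)
    intro x hx
    rw [qf_deriv2 q c vp vm γ (lt_of_lt_of_le hvp hx.1)]
    linarith [hc x hx]
  intro x hx
  exact hconc.ge_on_segment (left_mem_Icc.2 hlt.le) (right_mem_Icc.2 hlt.le)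
    ((segment_eq_Icc hlt.le).symm ▸ hx)


lemma key_identity (γ α σ vm um : ℝ) (hγ : 1 < γ) (hvm : 0 < vm) (hσ : σ ≠ 0)
    (vt ht : ℝ → ℝ) (hvt : ContDiff ℝ 2 vt) (hht : ContDiff ℝ 1 ht)
    (hpos : ∀ ξ, 0 < vt ξ)
    (eq1 : ∀ ξ, -σ * deriv vt ξ - deriv ht ξ =
        -deriv (fun x => (vt x) ^ (γ - α) * deriv (fun y => pres γ (vt y)) x) ξ)
    (eq2 : ∀ ξ, -σ * deriv ht ξ + deriv (fun y => pres γ (vt y)) ξ = 0)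
    (hvb : Tendsto vt atBot (nhds vm)) (hhb : Tendsto ht atBot (nhds um))
    (hdb : Tendsto (deriv vt) atBot (nhds 0)) :
    ∀ ξ, -γ * (vt ξ) ^ (-α - 1) * deriv vt ξ =
      σ * (vt ξ - vm) + (pres γ (vt ξ) - pres γ vm) / σ := by
  have hvtd : Differentiable ℝ vt := hvt.differentiable (by norm_num)
  have hdvt : ContDiff ℝ 1 (deriv vt) :=
    (contDiff_succ_iff_deriv.mp (show ContDiff ℝ (1 + 1) vt by rwa [one_add_one_eq_two])).2.2
  have hdvtd : Differentiable ℝ (deriv vt) := hdvt.differentiable (by norm_num)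
  have hhtd : Differentiable ℝ ht := hht.differentiable (by norm_num)
  -- derivative of pres ∘ vt
  have pcomp : ∀ ξ, HasDerivAt (fun y => pres γ (vt y))
      (-γ * (vt ξ) ^ (-γ - 1) * deriv vt ξ) ξ := by
    intro ξ
    have h1 := Real.hasDerivAt_rpow_const (x := vt ξ) (p := -γ) (Or.inl (hpos ξ).ne')
    have := h1.comp ξ (hvtd ξ).hasDerivAt
    simpa [pres, mul_assoc, Function.comp_def] using this
  have hderiv_pvt : ∀ ξ, deriv (fun y => pres γ (vt y)) ξ = -γ * (vt ξ) ^ (-γ - 1) * deriv vt ξ :=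
    fun ξ => (pcomp ξ).deriv
  -- continuity of rpow composed with vt limits
  have hrpowcont : ∀ (e : ℝ), Tendsto (fun ξ => (vt ξ) ^ e) atBot (nhds (vm ^ e)) := by
    intro e
    have : ContinuousAt (fun v : ℝ => v ^ e) vm :=
      Real.continuousAt_rpow_const vm e (Or.inl hvm.ne')
    exact this.tendsto.comp hvb
  -- Step 1 : -σ * ht + pres∘vt is constant, equal to its limit
  have hF : ∀ ξ, -σ * ht ξ + pres γ (vt ξ) = -σ * um + pres γ vm := by
    have hFd : ∀ ξ, HasDerivAt (fun ξ => -σ * ht ξ + pres γ (vt ξ)) 0 ξ := by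
      intro ξ
      have := ((hhtd ξ).hasDerivAt.const_mul (-σ)).add (pcomp ξ)
      have h0 : -σ * deriv ht ξ + -γ * (vt ξ) ^ (-γ - 1) * deriv vt ξ = 0 := by
        have := eq2 ξ; rwa [hderiv_pvt ξ] at this
      rwa [h0] at this
    have hconst : ∀ ξ, (-σ * ht ξ + pres γ (vt ξ)) = (-σ * ht 0 + pres γ (vt 0)) := by
      intro ξ
      exact is_const_of_deriv_eq_zero (fun x => ((hFd x).differentiableAt))
        (fun x => (hFd x).deriv) ξ 0
    have hlim : Tendsto (fun ξ => -σ * ht ξ + pres γ (vt ξ)) atBot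
        (nhds (-σ * um + pres γ vm)) := by
      exact (hhb.const_mul (-σ)).add (hrpowcont (-γ))
    have hlim2 : Tendsto (fun ξ => -σ * ht ξ + pres γ (vt ξ)) atBot
        (nhds (-σ * ht 0 + pres γ (vt 0))) := by
      rw [show (fun ξ => -σ * ht ξ + pres γ (vt ξ)) = fun _ => -σ * ht 0 + pres γ (vt 0)
        from funext hconst]
      exact tendsto_const_nhds
    have := tendsto_nhds_unique hlim2 hlim
    intro ξ; rw [hconst ξ, this]
  -- W and its properties
  set W : ℝ → ℝ := fun x => -γ * (vt x) ^ (-α - 1) * deriv vt x with hW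
  have hWeq : (fun x => (vt x) ^ (γ - α) * deriv (fun y => pres γ (vt y)) x) = W := by
    funext x
    rw [hderiv_pvt x, hW]
    have : (vt x) ^ (γ - α) * (vt x) ^ (-γ - 1) = (vt x) ^ (-α - 1) := by
      rw [← Real.rpow_add (hpos x)]; ring_nf
    calc (vt x) ^ (γ - α) * (-γ * (vt x) ^ (-γ - 1) * deriv vt x)
        = -γ * ((vt x) ^ (γ - α) * (vt x) ^ (-γ - 1)) * deriv vt x := by ring
      _ = -γ * (vt x) ^ (-α - 1) * deriv vt x := by rw [this]
  have hWd : Differentiable ℝ W := by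
    apply Differentiable.mul
    · apply Differentiable.const_mul
      intro x
      exact ((Real.hasDerivAt_rpow_const (x := vt x) (p := -α - 1)
        (Or.inl (hpos x).ne')).comp x (hvtd x).hasDerivAt).differentiableAt
    · exact hdvtd
  have hWlim : Tendsto W atBot (nhds 0) := by
    have h1 : Tendsto (fun ξ => -γ * (vt ξ) ^ (-α - 1)) atBot (nhds (-γ * vm ^ (-α - 1))) :=
      (hrpowcont (-α - 1)).const_mul (-γ)
    have h2 := h1.mul hdb
    rw [mul_zero] at h2
    exact h2
  -- Step 2 : -σ * vt - ht + W is constant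
  have hG : ∀ ξ, -σ * vt ξ - ht ξ + W ξ = -σ * vm - um + 0 := by
    have hGd : ∀ ξ, HasDerivAt (fun ξ => -σ * vt ξ - ht ξ + W ξ)
        (-σ * deriv vt ξ - deriv ht ξ + deriv W ξ) ξ := by
      intro ξ
      exact (((hvtd ξ).hasDerivAt.const_mul (-σ)).sub (hhtd ξ).hasDerivAt).add
        ((hWd ξ).hasDerivAt)
    have hGd0 : ∀ ξ, HasDerivAt (fun ξ => -σ * vt ξ - ht ξ + W ξ) 0 ξ := by
      intro ξ
      have h0 : -σ * deriv vt ξ - deriv ht ξ + deriv W ξ = 0 := by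
        have := eq1 ξ; rw [hWeq] at this; linarith
      rw [← h0]; exact hGd ξ
    have hconst : ∀ ξ, (-σ * vt ξ - ht ξ + W ξ) = (-σ * vt 0 - ht 0 + W 0) := by
      intro ξ
      exact is_const_of_deriv_eq_zero (fun x => ((hGd0 x).differentiableAt))
        (fun x => (hGd0 x).deriv) ξ 0
    have hlim : Tendsto (fun ξ => -σ * vt ξ - ht ξ + W ξ) atBot (nhds (-σ * vm - um + 0)) :=
      ((hvb.const_mul (-σ)).sub hhb).add hWlim
    have hlim2 : Tendsto (fun ξ => -σ * vt ξ - ht ξ + W ξ) atBot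
        (nhds (-σ * vt 0 - ht 0 + W 0)) := by
      rw [show (fun ξ => -σ * vt ξ - ht ξ + W ξ) = fun _ => -σ * vt 0 - ht 0 + W 0
        from funext hconst]
      exact tendsto_const_nhds
    have := tendsto_nhds_unique hlim2 hlim
    intro ξ; rw [hconst ξ, this]
  -- combine
  intro ξ
  have h1 := hF ξ
  have h2 := hG ξ
  have hht' : ht ξ = um + (pres γ (vt ξ) - pres γ vm) / σ := by
    field_simp at h1 ⊢
    linarith
  rw [hht'] at h2
  have : W ξ = σ * (vt ξ - vm) + (pres γ (vt ξ) - pres γ vm) / σ := by linarith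
  exact this

lemma range_bdd (vt : ℝ → ℝ) (hc : Continuous vt) (hpos : ∀ ξ, 0 < vt ξ) {vmm vpp : ℝ}
    (hvm : 0 < vmm) (hvp : 0 < vpp)
    (hvb : Tendsto vt atBot (nhds vmm)) (hva : Tendsto vt atTop (nhds vpp)) :
    ∃ cc dd : ℝ, 0 < cc ∧ ∀ ξ, vt ξ ∈ Icc cc dd := by
  have h1 : ∀ᶠ ξ in atBot, vt ξ ∈ Icc (vmm / 2) (vmm + 1) :=
    hvb (Icc_mem_nhds (by linarith) (by linarith))
  have h2 : ∀ᶠ ξ in atTop, vt ξ ∈ Icc (vpp / 2) (vpp + 1) :=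
    hva (Icc_mem_nhds (by linarith) (by linarith))
  obtain ⟨A, hA⟩ := eventually_atBot.mp h1
  obtain ⟨B, hB⟩ := eventually_atTop.mp h2
  have hIne : (Icc (min A B) (max A B)).Nonempty := nonempty_Icc.2 min_le_max
  obtain ⟨xm, hxmI, hxm⟩ := isCompact_Icc.exists_isMinOn hIne hc.continuousOn
  obtain ⟨xM, hxMI, hxM⟩ := isCompact_Icc.exists_isMaxOn hIne hc.continuousOn
  refine ⟨min (min (vmm / 2) (vpp / 2)) (vt xm), max (max (vmm + 1) (vpp + 1)) (vt xM),
    lt_min (lt_min (by linarith) (by linarith)) (hpos xm), fun ξ => ?_⟩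
  rcases le_or_gt ξ A with h | h
  · have := hA ξ h
    exact ⟨le_trans (min_le_left _ _) (le_trans (min_le_left _ _) this.1),
      le_trans this.2 (le_trans (le_max_left _ _) (le_max_left _ _))⟩
  rcases le_or_gt B ξ with h' | h'
  · have := hB ξ h'
    exact ⟨le_trans (min_le_left _ _) (le_trans (min_le_right _ _) this.1),
      le_trans this.2 (le_trans (le_max_right _ _) (le_max_left _ _))⟩
  · have hξI : ξ ∈ Icc (min A B) (max A B) :=
      ⟨le_trans (min_le_left _ _) h.le, le_trans h'.le (le_max_right _ _)⟩
    exact ⟨le_trans (min_le_right _ _) (hxm hξI),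
      le_trans (hxM hξI) (le_max_right _ _)⟩

lemma no_touch (vt Ψ : ℝ → ℝ) (cc dd L e vmm vpp : ℝ)
    (hd : Differentiable ℝ vt)
    (hrange : ∀ ξ, vt ξ ∈ Icc cc dd)
    (hphi : ∀ ξ, deriv vt ξ = Ψ (vt ξ))
    (hLip : ∀ x ∈ Icc cc dd, |Ψ x| ≤ L * |x - e|)
    (hvb : Tendsto vt atBot (nhds vmm)) (hva : Tendsto vt atTop (nhds vpp))
    (hne : vpp ≠ vmm) (hL0 : 0 ≤ L) (ξ₀ : ℝ) (h0 : vt ξ₀ = e) : False := by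
  set w : ℝ → ℝ := fun ξ => (vt ξ - e) ^ 2 with hw
  have hwD : ∀ ξ, HasDerivAt w (2 * (vt ξ - e) * Ψ (vt ξ)) ξ := by
    intro ξ
    have h1 : HasDerivAt (fun ξ => vt ξ - e) (deriv vt ξ) ξ := ((hd ξ).hasDerivAt).sub_const e
    have := h1.pow 2
    rw [hphi ξ] at this
    exact this.congr_deriv (by ring)
  have hwb : ∀ ξ, |2 * (vt ξ - e) * Ψ (vt ξ)| ≤ 2 * L * w ξ := by
    intro ξ
    have h1 := hLip (vt ξ) (hrange ξ)
    show |2 * (vt ξ - e) * Ψ (vt ξ)| ≤ 2 * L * (vt ξ - e) ^ 2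
    have h2 : |2 * (vt ξ - e) * Ψ (vt ξ)| = 2 * (|vt ξ - e| * |Ψ (vt ξ)|) := by
      rw [abs_mul, abs_mul]; simp [abs_of_nonneg]; ring
    rw [h2]
    have h4 : |vt ξ - e| * |Ψ (vt ξ)| ≤ |vt ξ - e| * (L * |vt ξ - e|) :=
      mul_le_mul_of_nonneg_left h1 (abs_nonneg _)
    have h3 : |vt ξ - e| * |vt ξ - e| = (vt ξ - e) ^ 2 := by
      rw [← abs_mul, abs_of_nonneg (by nlinarith [sq_nonneg (vt ξ - e)] : (0:ℝ) ≤ (vt ξ - e) * (vt ξ - e))]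
      ring
    nlinarith [h4, h3]
  -- forward
  have hfwd : ∀ ξ ≥ ξ₀, vt ξ = e := by
    have hu : ∀ ξ, HasDerivAt (fun ξ => w ξ * Real.exp (-(2 * L) * ξ))
        ((2 * (vt ξ - e) * Ψ (vt ξ)) * Real.exp (-(2 * L) * ξ)
          + w ξ * (Real.exp (-(2 * L) * ξ) * (-(2 * L)))) ξ := by
      intro ξ
      have hlin : HasDerivAt (fun x : ℝ => -(2 * L) * x) (-(2 * L)) ξ := by
        simpa using (hasDerivAt_id ξ).const_mul (-(2 * L))
      exact (hwD ξ).mul hlin.exp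
    have hanti : Antitone (fun ξ => w ξ * Real.exp (-(2 * L) * ξ)) := by
      apply antitone_of_deriv_nonpos
      · exact fun ξ => ((hu ξ).differentiableAt)
      · intro ξ
        rw [(hu ξ).deriv]
        have he : 0 < Real.exp (-(2 * L) * ξ) := Real.exp_pos _
        have := hwb ξ
        have h2 := abs_le.mp this
        nlinarith
    intro ξ hξ
    have h1 : w ξ * Real.exp (-(2 * L) * ξ) ≤ w ξ₀ * Real.exp (-(2 * L) * ξ₀) := hanti hξ
    have h2 : w ξ₀ = 0 := by rw [hw]; simp [h0]
    have h3 : 0 ≤ w ξ := sq_nonneg _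
    have he : 0 < Real.exp (-(2 * L) * ξ) := Real.exp_pos _
    rw [h2, zero_mul] at h1
    have h4 : w ξ = 0 := by nlinarith
    have := pow_eq_zero_iff (n := 2) (by norm_num) |>.mp h4
    linarith [this]
  -- backward
  have hbwd : ∀ ξ ≤ ξ₀, vt ξ = e := by
    have hu : ∀ ξ, HasDerivAt (fun ξ => w ξ * Real.exp ((2 * L) * ξ))
        ((2 * (vt ξ - e) * Ψ (vt ξ)) * Real.exp ((2 * L) * ξ)
          + w ξ * (Real.exp ((2 * L) * ξ) * (2 * L))) ξ := by
      intro ξ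
      have hlin : HasDerivAt (fun x : ℝ => (2 * L) * x) (2 * L) ξ := by
        simpa using (hasDerivAt_id ξ).const_mul (2 * L)
      exact (hwD ξ).mul hlin.exp
    have hmono : Monotone (fun ξ => w ξ * Real.exp ((2 * L) * ξ)) := by
      apply monotone_of_deriv_nonneg
      · exact fun ξ => ((hu ξ).differentiableAt)
      · intro ξ
        rw [(hu ξ).deriv]
        have he : 0 < Real.exp ((2 * L) * ξ) := Real.exp_pos _
        have h2 := abs_le.mp (hwb ξ)
        nlinarith
    intro ξ hξ
    have h1 : w ξ * Real.exp ((2 * L) * ξ) ≤ w ξ₀ * Real.exp ((2 * L) * ξ₀) := hmono hξ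
    have h2 : w ξ₀ = 0 := by rw [hw]; simp [h0]
    have h3 : 0 ≤ w ξ := sq_nonneg _
    have he : 0 < Real.exp ((2 * L) * ξ) := Real.exp_pos _
    rw [h2, zero_mul] at h1
    have h4 : w ξ = 0 := by nlinarith
    have := pow_eq_zero_iff (n := 2) (by norm_num) |>.mp h4
    linarith [this]
  have hall : ∀ ξ, vt ξ = e := by
    intro ξ
    rcases le_or_gt ξ ξ₀ with h | h
    · exact hbwd ξ h
    · exact hfwd ξ h.le
  have h1 : Tendsto vt atBot (nhds e) := by
    rw [show vt = fun _ => e from funext hall]; exact tendsto_const_nhds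
  have h2 : Tendsto vt atTop (nhds e) := by
    rw [show vt = fun _ => e from funext hall]; exact tendsto_const_nhds
  exact hne ((tendsto_nhds_unique hva h2).trans (tendsto_nhds_unique h1 hvb))

lemma stay_between (vt Ψ : ℝ → ℝ) (cc dd L vmm vpp : ℝ)
    (hd : Differentiable ℝ vt)
    (hrange : ∀ ξ, vt ξ ∈ Icc cc dd)
    (hphi : ∀ ξ, deriv vt ξ = Ψ (vt ξ))
    (hLipm : ∀ x ∈ Icc cc dd, |Ψ x| ≤ L * |x - vmm|)
    (hLipp : ∀ x ∈ Icc cc dd, |Ψ x| ≤ L * |x - vpp|)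
    (hvb : Tendsto vt atBot (nhds vmm)) (hva : Tendsto vt atTop (nhds vpp))
    (hlt : vpp < vmm) (hL0 : 0 ≤ L) :
    ∀ ξ, vpp < vt ξ ∧ vt ξ < vmm := by
  have hcont : Continuous vt := hd.continuous
  have hnt : ∀ ξ₀, vt ξ₀ ≠ vmm := by
    intro ξ₀ h
    exact no_touch vt Ψ cc dd L vmm vmm vpp hd hrange hphi hLipm hvb hva hlt.ne hL0 ξ₀ h
  have hnt' : ∀ ξ₀, vt ξ₀ ≠ vpp := by
    intro ξ₀ h
    exact no_touch vt Ψ cc dd L vpp vmm vpp hd hrange hphi hLipp hvb hva hlt.ne hL0 ξ₀ h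
  intro ξ
  constructor
  · by_contra hcon
    push_neg at hcon
    have h1 : vt ξ < vpp := lt_of_le_of_ne hcon (hnt' ξ)
    obtain ⟨ξ₁, hξ₁⟩ := (hvb.eventually ((Ioi_mem_nhds hlt : Ioi vpp ∈ nhds vmm) : ∀ᶠ x in nhds vmm, x ∈ Ioi vpp) : ∀ᶠ ξ in atBot, vt ξ ∈ Ioi vpp).exists
    have : vpp ∈ uIcc (vt ξ) (vt ξ₁) := by
      rw [mem_uIcc]
      left
      exact ⟨h1.le, le_of_lt hξ₁⟩
    obtain ⟨ξ₂, _, hξ₂⟩ := intermediate_value_uIcc (hcont.continuousOn) this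
    exact hnt' ξ₂ hξ₂
  · by_contra hcon
    push_neg at hcon
    have h1 : vmm < vt ξ := lt_of_le_of_ne hcon (Ne.symm (hnt ξ))
    obtain ⟨ξ₁, hξ₁⟩ := (hva.eventually ((Iio_mem_nhds hlt : Iio vmm ∈ nhds vpp) : ∀ᶠ x in nhds vpp, x ∈ Iio vmm) : ∀ᶠ ξ in atTop, vt ξ ∈ Iio vmm).exists
    have : vmm ∈ uIcc (vt ξ) (vt ξ₁) := by
      rw [mem_uIcc]
      right
      exact ⟨le_of_lt hξ₁, h1.le⟩
    obtain ⟨ξ₂, _, hξ₂⟩ := intermediate_value_uIcc (hcont.continuousOn) this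
    exact hnt ξ₂ hξ₂

lemma deriv_mul_exp (f : ℝ → ℝ) (hf : Differentiable ℝ f) (r ξ : ℝ) :
    HasDerivAt (fun ξ => f ξ * Real.exp (r * ξ)) ((deriv f ξ + r * f ξ) * Real.exp (r * ξ)) ξ := by
  have hlin : HasDerivAt (fun x : ℝ => r * x) r ξ := by
    simpa using (hasDerivAt_id ξ).const_mul r
  have := (hf ξ).hasDerivAt.mul hlin.exp
  exact this.congr_deriv (by ring)

lemma tail_Iic (f : ℝ → ℝ) (hf : Differentiable ℝ f) (r : ℝ)
    (h : ∀ ξ < 0, r * f ξ ≤ deriv f ξ) : ∀ ξ ≤ 0, f ξ ≤ f 0 * Real.exp (r * ξ) := by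
  have hg : ∀ ξ, HasDerivAt (fun ξ => f ξ * Real.exp (-r * ξ))
      ((deriv f ξ + -r * f ξ) * Real.exp (-r * ξ)) ξ := deriv_mul_exp f hf (-r)
  have hmono : MonotoneOn (fun ξ => f ξ * Real.exp (-r * ξ)) (Iic 0) := by
    apply monotoneOn_of_deriv_nonneg (convex_Iic 0)
    · exact (Continuous.mul (hf.continuous) (Real.continuous_exp.comp (by continuity))).continuousOn
    · intro ξ _
      exact ((hg ξ).differentiableAt).differentiableWithinAt
    · intro ξ hξ
      rw [interior_Iic] at hξ
      rw [(hg ξ).deriv]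
      have := h ξ hξ
      have he := Real.exp_pos (-r * ξ)
      nlinarith
  intro ξ hξ
  have h1 : f ξ * Real.exp (-r * ξ) ≤ f 0 * Real.exp (-r * 0) :=
    hmono hξ (self_mem_Iic) hξ
  have h2 := mul_le_mul_of_nonneg_right h1 (Real.exp_pos (r * ξ)).le
  rw [mul_assoc, mul_assoc, ← Real.exp_add, ← Real.exp_add] at h2
  have e1 : -r * ξ + r * ξ = 0 := by ring
  have e2 : -r * 0 + r * ξ = r * ξ := by ring
  rw [e1, e2, Real.exp_zero, mul_one] at h2
  exact h2

lemma tail_Iic' (f : ℝ → ℝ) (hf : Differentiable ℝ f) (r : ℝ)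
    (h : ∀ ξ < 0, deriv f ξ ≤ r * f ξ) : ∀ ξ ≤ 0, f 0 * Real.exp (r * ξ) ≤ f ξ := by
  have hg : ∀ ξ, HasDerivAt (fun ξ => f ξ * Real.exp (-r * ξ))
      ((deriv f ξ + -r * f ξ) * Real.exp (-r * ξ)) ξ := deriv_mul_exp f hf (-r)
  have hanti : AntitoneOn (fun ξ => f ξ * Real.exp (-r * ξ)) (Iic 0) := by
    apply antitoneOn_of_deriv_nonpos (convex_Iic 0)
    · exact (Continuous.mul (hf.continuous) (Real.continuous_exp.comp (by continuity))).continuousOn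
    · intro ξ _
      exact ((hg ξ).differentiableAt).differentiableWithinAt
    · intro ξ hξ
      rw [interior_Iic] at hξ
      rw [(hg ξ).deriv]
      have := h ξ hξ
      have he := Real.exp_pos (-r * ξ)
      nlinarith
  intro ξ hξ
  have h1 : f 0 * Real.exp (-r * 0) ≤ f ξ * Real.exp (-r * ξ) :=
    hanti hξ (self_mem_Iic) hξ
  have h2 := mul_le_mul_of_nonneg_right h1 (Real.exp_pos (r * ξ)).le
  rw [mul_assoc, mul_assoc, ← Real.exp_add, ← Real.exp_add] at h2
  have e1 : -r * ξ + r * ξ = 0 := by ring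
  have e2 : -r * 0 + r * ξ = r * ξ := by ring
  rw [e1, e2, Real.exp_zero, mul_one] at h2
  exact h2

lemma tail_Ici (f : ℝ → ℝ) (hf : Differentiable ℝ f) (r : ℝ)
    (h : ∀ ξ > 0, deriv f ξ ≤ r * f ξ) : ∀ ξ ≥ 0, f ξ ≤ f 0 * Real.exp (r * ξ) := by
  have hg : ∀ ξ, HasDerivAt (fun ξ => f ξ * Real.exp (-r * ξ))
      ((deriv f ξ + -r * f ξ) * Real.exp (-r * ξ)) ξ := deriv_mul_exp f hf (-r)
  have hanti : AntitoneOn (fun ξ => f ξ * Real.exp (-r * ξ)) (Ici 0) := by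
    apply antitoneOn_of_deriv_nonpos (convex_Ici 0)
    · exact (Continuous.mul (hf.continuous) (Real.continuous_exp.comp (by continuity))).continuousOn
    · intro ξ _
      exact ((hg ξ).differentiableAt).differentiableWithinAt
    · intro ξ hξ
      rw [interior_Ici] at hξ
      rw [(hg ξ).deriv]
      have := h ξ hξ
      have he := Real.exp_pos (-r * ξ)
      nlinarith
  intro ξ hξ
  have h1 : f ξ * Real.exp (-r * ξ) ≤ f 0 * Real.exp (-r * 0) :=
    hanti (self_mem_Ici) hξ hξ
  have h2 := mul_le_mul_of_nonneg_right h1 (Real.exp_pos (r * ξ)).le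
  rw [mul_assoc, mul_assoc, ← Real.exp_add, ← Real.exp_add] at h2
  have e1 : -r * ξ + r * ξ = 0 := by ring
  have e2 : -r * 0 + r * ξ = r * ξ := by ring
  rw [e1, e2, Real.exp_zero, mul_one] at h2
  exact h2

lemma tail_Ici' (f : ℝ → ℝ) (hf : Differentiable ℝ f) (r : ℝ)
    (h : ∀ ξ > 0, r * f ξ ≤ deriv f ξ) : ∀ ξ ≥ 0, f 0 * Real.exp (r * ξ) ≤ f ξ := by
  have hg : ∀ ξ, HasDerivAt (fun ξ => f ξ * Real.exp (-r * ξ))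
      ((deriv f ξ + -r * f ξ) * Real.exp (-r * ξ)) ξ := deriv_mul_exp f hf (-r)
  have hmono : MonotoneOn (fun ξ => f ξ * Real.exp (-r * ξ)) (Ici 0) := by
    apply monotoneOn_of_deriv_nonneg (convex_Ici 0)
    · exact (Continuous.mul (hf.continuous) (Real.continuous_exp.comp (by continuity))).continuousOn
    · intro ξ _
      exact ((hg ξ).differentiableAt).differentiableWithinAt
    · intro ξ hξ
      rw [interior_Ici] at hξ
      rw [(hg ξ).deriv]
      have := h ξ hξ
      have he := Real.exp_pos (-r * ξ)
      nlinarith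
  intro ξ hξ
  have h1 : f 0 * Real.exp (-r * 0) ≤ f ξ * Real.exp (-r * ξ) :=
    hmono (self_mem_Ici) hξ hξ
  have h2 := mul_le_mul_of_nonneg_right h1 (Real.exp_pos (r * ξ)).le
  rw [mul_assoc, mul_assoc, ← Real.exp_add, ← Real.exp_add] at h2
  have e1 : -r * ξ + r * ξ = 0 := by ring
  have e2 : -r * 0 + r * ξ = r * ξ := by ring
  rw [e1, e2, Real.exp_zero, mul_one] at h2
  exact h2


set_option maxHeartbeats 1000000 in
/-- Tail estimates for small viscous shocks of the transformed Navier-Stokes system. -/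
theorem stmt11 (γ α vm um : ℝ) (hγ : 1 < γ) (hα : 0 < α) (hαγ : α ≤ γ) (hγα : γ ≤ α + 1)
    (hvm : 0 < vm) :
    ∃ ε₀ > (0 : ℝ), ∃ C > (0 : ℝ), ∃ C₁ > (0 : ℝ), ∃ C₂ > (0 : ℝ),
      ∀ ε : ℝ, 0 < ε → ε < ε₀ →
      ∀ vp : ℝ, 0 < vp → vp < vm → |pres γ vm - pres γ vp| = ε →
      ∀ σ up : ℝ,
      σ = -Real.sqrt (-((pres γ vp - pres γ vm) / (vp - vm))) →
      up = um - σ * (vp - vm) →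
      ∀ vt ht : ℝ → ℝ,
      ContDiff ℝ 2 vt → ContDiff ℝ 1 ht →
      (∀ ξ, 0 < vt ξ) →
      (∀ ξ, -σ * deriv vt ξ - deriv ht ξ =
        -deriv (fun x => (vt x) ^ (γ - α) * deriv (fun y => pres γ (vt y)) x) ξ) →
      (∀ ξ, -σ * deriv ht ξ + deriv (fun y => pres γ (vt y)) ξ = 0) →
      Filter.Tendsto vt Filter.atBot (nhds vm) →
      Filter.Tendsto ht Filter.atBot (nhds um) →
      Filter.Tendsto vt Filter.atTop (nhds vp) →
      Filter.Tendsto ht Filter.atTop (nhds up) →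
      Filter.Tendsto (deriv vt) Filter.atBot (nhds 0) →
      Filter.Tendsto (deriv vt) Filter.atTop (nhds 0) →
      vt 0 = (vm + vp) / 2 →
      (∀ ξ : ℝ, -C⁻¹ * ε ^ 2 * Real.exp (-C₁ * ε * |ξ|) ≤ deriv vt ξ ∧
            deriv vt ξ ≤ -C * ε ^ 2 * Real.exp (-C₂ * ε * |ξ|)) ∧
      (∀ ξ ∈ Set.Icc (-(1 / ε)) (1 / ε), C * ε ^ 2 ≤ |deriv vt ξ|) := by
  have hγ0 : (0:ℝ) < γ := by linarith
  have hγne : γ ≠ 0 := ne_of_gt hγ0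
  have hvm2 : (0:ℝ) < vm / 2 := by linarith
  -- constants
  set m1 : ℝ := γ * vm ^ (-γ - 1) with hm1def
  set M1 : ℝ := γ * (vm / 2) ^ (-γ - 1) with hM1def
  set m2 : ℝ := γ * (γ + 1) * vm ^ (-γ - 2) with hm2def
  set M2 : ℝ := γ * (γ + 1) * (vm / 2) ^ (-γ - 2) with hM2def
  set mA : ℝ := (vm / 2) ^ (α + 1) with hmAdef
  set MA : ℝ := vm ^ (α + 1) with hMAdef
  have hm1 : 0 < m1 := mul_pos hγ0 (Real.rpow_pos_of_pos hvm _)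
  have hM1 : 0 < M1 := mul_pos hγ0 (Real.rpow_pos_of_pos hvm2 _)
  have hm2 : 0 < m2 := mul_pos (mul_pos hγ0 (by linarith)) (Real.rpow_pos_of_pos hvm _)
  have hM2 : 0 < M2 := mul_pos (mul_pos hγ0 (by linarith)) (Real.rpow_pos_of_pos hvm2 _)
  have hmA : 0 < mA := Real.rpow_pos_of_pos hvm2 _
  have hMA : 0 < MA := Real.rpow_pos_of_pos hvm _
  have hm1M1 : m1 ≤ M1 := by
    apply mul_le_mul_of_nonneg_left _ hγ0.le
    exact Real.rpow_le_rpow_of_nonpos hvm2 (by linarith) (by linarith)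
  set k1 : ℝ := mA * (m2 / 2) / (γ * Real.sqrt M1) with hk1def
  set k2 : ℝ := MA * (M2 / 2) / (γ * Real.sqrt m1) with hk2def
  have hk1 : 0 < k1 := div_pos (mul_pos hmA (by linarith)) (mul_pos hγ0 (Real.sqrt_pos.mpr hM1))
  have hk2 : 0 < k2 := div_pos (mul_pos hMA (by linarith)) (mul_pos hγ0 (Real.sqrt_pos.mpr hm1))
  set C1 : ℝ := k1 / (2 * M1) with hC1def
  set C2 : ℝ := k2 / m1 with hC2def
  set Clow : ℝ := k1 / (4 * M1 ^ 2) with hClowdef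
  set Cup : ℝ := k2 / (2 * m1 ^ 2) with hCupdef
  have hC1 : 0 < C1 := div_pos hk1 (by positivity)
  have hC2 : 0 < C2 := div_pos hk2 hm1
  have hClow : 0 < Clow := div_pos hk1 (by positivity)
  have hCup : 0 < Cup := div_pos hk2 (by positivity)
  set C : ℝ := min (Clow * Real.exp (-C2)) Cup⁻¹ with hCdef
  have hC : 0 < C := lt_min (mul_pos hClow (Real.exp_pos _)) (inv_pos.mpr hCup)
  have hCCup : Cup ≤ C⁻¹ := by
    rw [le_inv_comm₀]
    · exact min_le_right _ _
    · exact hCup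
    · exact hC
  have hε₀ : (0:ℝ) < (vm / 2) ^ (-γ) - vm ^ (-γ) := by
    have := Real.rpow_lt_rpow_of_neg hvm2 (by linarith : vm / 2 < vm) (by linarith : -γ < 0)
    linarith
  refine ⟨(vm / 2) ^ (-γ) - vm ^ (-γ), hε₀, C, hC, C1, hC1, C2, hC2, ?_⟩
  intro ε hε hεε₀ vp hvp0 hvplt habs σ up hσdef hupdef vt ht hvt hht hpos eq1 eq2 hvb hhb hva
    hha hdb hda hmid
  have hvtd : Differentiable ℝ vt := hvt.differentiable (by norm_num)
  -- basic pressure facts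
  have hpm : pres γ vm = vm ^ (-γ) := rfl
  have hpp : pres γ vp = vp ^ (-γ) := rfl
  have hplt : pres γ vm < pres γ vp := by
    rw [hpm, hpp]
    exact Real.rpow_lt_rpow_of_neg hvp0 hvplt (by linarith)
  have hεeq : pres γ vp - pres γ vm = ε := by
    rw [← habs, abs_of_neg (by linarith : pres γ vm - pres γ vp < 0)]
    ring
  set δ : ℝ := vm - vp with hδdef
  have hδ : 0 < δ := by simp only [hδdef]; linarith
  set q : ℝ := ε / δ with hqdef
  have hq : 0 < q := div_pos hε hδ
  have harg : -((pres γ vp - pres γ vm) / (vp - vm)) = q := by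
    rw [hεeq, hqdef]
    rw [show vp - vm = -δ by simp only [hδdef]; ring]
    field_simp
  set s : ℝ := Real.sqrt q with hsdef
  have hs : 0 < s := Real.sqrt_pos.mpr hq
  have hσs : σ = -s := by rw [hσdef, harg]
  have hs2 : s ^ 2 = q := Real.sq_sqrt hq.le
  have hσne : σ ≠ 0 := by rw [hσs]; exact neg_ne_zero.mpr hs.ne'
  -- vp ≥ vm / 2
  have hvphalf : vm / 2 ≤ vp := by
    by_contra hcon
    push_neg at hcon
    have h1 : (vm / 2) ^ (-γ) < vp ^ (-γ) :=
      Real.rpow_lt_rpow_of_neg hvp0 hcon (by linarith)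
    rw [hpm, hpp] at hεeq
    linarith
  -- MVT: bounds on q
  have hqbounds : m1 ≤ q ∧ q ≤ M1 := by
    have hcont : ContinuousOn (fun x : ℝ => x ^ (-γ)) (Icc vp vm) := by
      intro x hx
      exact (Real.continuousAt_rpow_const x (-γ)
        (Or.inl (ne_of_gt (lt_of_lt_of_le hvp0 hx.1)))).continuousWithinAt
    obtain ⟨c, hc, hceq⟩ := exists_hasDerivAt_eq_slope (fun x : ℝ => x ^ (-γ))
      (fun x => -γ * x ^ (-γ - 1)) hvplt hcont
      (fun x hx => Real.hasDerivAt_rpow_const (Or.inl (ne_of_gt (lt_trans hvp0 hx.1))))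
    have hcpos : 0 < c := lt_trans hvp0 hc.1
    have hslope : (vm ^ (-γ) - vp ^ (-γ)) / (vm - vp) = -q := by
      rw [hqdef]
      rw [hpm, hpp] at hεeq
      rw [show vm ^ (-γ) - vp ^ (-γ) = -ε by linarith]
      field_simp
      rw [hδdef, div_self (by linarith : vm - vp ≠ 0)]
    rw [hslope] at hceq
    have hqc : q = γ * c ^ (-γ - 1) := by linarith
    have hb1 : vm ^ (-γ - 1) ≤ c ^ (-γ - 1) :=
      Real.rpow_le_rpow_of_nonpos hcpos hc.2.le (by linarith)
    have hb2 : c ^ (-γ - 1) ≤ (vm / 2) ^ (-γ - 1) :=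
      Real.rpow_le_rpow_of_nonpos hvm2 (le_trans hvphalf hc.1.le) (by linarith)
    constructor
    · rw [hqc, hm1def]; exact mul_le_mul_of_nonneg_left hb1 hγ0.le
    · rw [hqc, hM1def]; exact mul_le_mul_of_nonneg_left hb2 hγ0.le
  obtain ⟨hm1q, hqM1⟩ := hqbounds
  have hqδ : q * δ = ε := by rw [hqdef]; field_simp
  have hδl : ε / M1 ≤ δ := by
    rw [div_le_iff₀ hM1]
    have h := mul_le_mul_of_nonneg_right hqM1 hδ.le
    rw [hqδ] at h
    linarith
  have hδu : δ ≤ ε / m1 := by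
    rw [le_div_iff₀ hm1]
    have h := mul_le_mul_of_nonneg_right hm1q hδ.le
    rw [hqδ] at h
    linarith
  -- the key identity
  have KEY := key_identity γ α σ vm um hγ hvm hσne vt ht hvt hht hpos eq1 eq2 hvb hhb hdb
  -- scalar ODE
  set gg : ℝ → ℝ := fun x => q * (x - vm) + x ^ (-γ) - vm ^ (-γ) with hggdef
  have PHI : ∀ ξ, deriv vt ξ = (vt ξ) ^ (α + 1) * gg (vt ξ) / (γ * s) := by
    intro ξ
    have E := KEY ξ
    rw [hσs] at E
    set x : ℝ := vt ξ with hxdef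
    set D : ℝ := deriv vt ξ with hDdef
    have hx0 : 0 < x := hpos ξ
    have hxx : x ^ (-α - 1) * x ^ (α + 1) = 1 := by
      rw [← Real.rpow_add hx0]
      norm_num
    have hgge : gg x = q * (x - vm) + x ^ (-γ) - vm ^ (-γ) := rfl
    have hpx : pres γ x = x ^ (-γ) := rfl
    rw [hpx, hpm] at E
    have hsne : (-s) ≠ 0 := neg_ne_zero.mpr hs.ne'
    have hE3 : γ * s * (x ^ (-α - 1) * D) = gg x := by
      have h1 : (-γ * x ^ (-α - 1) * D) * (-s)
          = (-s * (x - vm) + (x ^ (-γ) - vm ^ (-γ)) / (-s)) * (-s) := by rw [E]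
      rw [add_mul, div_mul_cancel₀ _ hsne] at h1
      calc γ * s * (x ^ (-α - 1) * D) = (-γ * x ^ (-α - 1) * D) * (-s) := by ring
        _ = -s * (x - vm) * (-s) + (x ^ (-γ) - vm ^ (-γ)) := h1
        _ = s ^ 2 * (x - vm) + (x ^ (-γ) - vm ^ (-γ)) := by ring
        _ = q * (x - vm) + (x ^ (-γ) - vm ^ (-γ)) := by rw [hs2]
        _ = gg x := by rw [hgge]; ring
    have hγs : γ * s ≠ 0 := by positivity
    rw [eq_div_iff hγs]
    calc D * (γ * s)
        = (γ * s * D) * 1 := by ring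
      _ = (γ * s * D) * (x ^ (-α - 1) * x ^ (α + 1)) := by rw [hxx]
      _ = x ^ (α + 1) * (γ * s * (x ^ (-α - 1) * D)) := by ring
      _ = x ^ (α + 1) * gg x := by rw [hE3]
  -- endpoint values of gg
  have hεeq' : vp ^ (-γ) - vm ^ (-γ) = ε := by rw [hpm, hpp] at hεeq; exact hεeq
  have hggvm : gg vm = 0 := by
    show q * (vm - vm) + vm ^ (-γ) - vm ^ (-γ) = 0
    ring
  have hggvp : gg vp = 0 := by
    show q * (vp - vm) + vp ^ (-γ) - vm ^ (-γ) = 0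
    have h1 : q * (vp - vm) = -(q * δ) := by rw [hδdef]; ring
    rw [h1, hqδ]
    linarith
  have hend_eq : q * vp + vp ^ (-γ) = q * vm + vm ^ (-γ) := by
    have h1 : q * (vm - vp) = ε := by rw [← hqδ, hδdef]
    linarith
  -- quadratic bounds on gg
  have hggub : ∀ x ∈ Icc vp vm, gg x ≤ -((m2 / 2) * ((x - vp) * (vm - x))) := by
    intro x hx
    have hcond : ∀ y ∈ Icc vp vm, 2 * (m2 / 2) ≤ γ * (γ + 1) * y ^ (-γ - 2) := by
      intro y hy
      have hy0 : 0 < y := lt_of_lt_of_le hvp0 hy.1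
      have h1 : vm ^ (-γ - 2) ≤ y ^ (-γ - 2) :=
        Real.rpow_le_rpow_of_nonpos hy0 hy.2 (by linarith)
      have h2 := mul_le_mul_of_nonneg_left h1 (by positivity : (0:ℝ) ≤ γ * (γ + 1))
      rw [hm2def]
      linarith
    have h := qf_le_max q (m2 / 2) vp vm γ hvp0 hvplt hcond x hx
    have h1 : qf q (m2 / 2) vp vm γ vp = q * vm + vm ^ (-γ) := by
      simp only [qf, sub_self, zero_mul, mul_zero, add_zero]
      linarith
    have h2 : qf q (m2 / 2) vp vm γ vm = q * vm + vm ^ (-γ) := by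
      simp only [qf, sub_self, zero_mul, mul_zero, add_zero]
    rw [h1, h2, max_self] at h
    have hqfx : qf q (m2 / 2) vp vm γ x
        = gg x + (m2 / 2) * ((x - vp) * (vm - x)) + (q * vm + vm ^ (-γ)) := by
      have hggx : gg x = q * (x - vm) + x ^ (-γ) - vm ^ (-γ) := rfl
      rw [hggx]
      simp only [qf]
      ring
    rw [hqfx] at h
    linarith
  have hgglb : ∀ x ∈ Icc vp vm, -((M2 / 2) * ((x - vp) * (vm - x))) ≤ gg x := by
    intro x hx
    have hcond : ∀ y ∈ Icc vp vm, γ * (γ + 1) * y ^ (-γ - 2) ≤ 2 * (M2 / 2) := by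
      intro y hy
      have hy0 : 0 < y := lt_of_lt_of_le hvp0 hy.1
      have h1 : y ^ (-γ - 2) ≤ (vm / 2) ^ (-γ - 2) :=
        Real.rpow_le_rpow_of_nonpos hvm2 (le_trans hvphalf hy.1) (by linarith)
      have h2 := mul_le_mul_of_nonneg_left h1 (by positivity : (0:ℝ) ≤ γ * (γ + 1))
      rw [hM2def]
      linarith
    have h := qf_ge_min q (M2 / 2) vp vm γ hvp0 hvplt hcond x hx
    have h1 : qf q (M2 / 2) vp vm γ vp = q * vm + vm ^ (-γ) := by
      simp only [qf, sub_self, zero_mul, mul_zero, add_zero]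
      linarith
    have h2 : qf q (M2 / 2) vp vm γ vm = q * vm + vm ^ (-γ) := by
      simp only [qf, sub_self, zero_mul, mul_zero, add_zero]
    rw [h1, h2, min_self] at h
    have hqfx : qf q (M2 / 2) vp vm γ x
        = gg x + (M2 / 2) * ((x - vp) * (vm - x)) + (q * vm + vm ^ (-γ)) := by
      have hggx : gg x = q * (x - vm) + x ^ (-γ) - vm ^ (-γ) := rfl
      rw [hggx]
      simp only [qf]
      ring
    rw [hqfx] at h
    linarith
  -- range bound
  obtain ⟨cc, dd, hcc, hrange⟩ := range_bdd vt hvtd.continuous hpos hvm hvp0 hvb hva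
  have hvmIcc : vm ∈ Icc cc dd :=
    isClosed_Icc.mem_of_tendsto hvb (Eventually.of_forall hrange)
  have hvpIcc : vp ∈ Icc cc dd :=
    isClosed_Icc.mem_of_tendsto hva (Eventually.of_forall hrange)
  -- the vector field and its Lipschitz bound
  set Ψ : ℝ → ℝ := fun x => x ^ (α + 1) * gg x / (γ * s) with hΨdef
  set Ψd : ℝ → ℝ := fun x =>
    ((α + 1) * x ^ (α + 1 - 1) * gg x + x ^ (α + 1) * (q * 1 + -γ * x ^ (-γ - 1))) / (γ * s)
    with hΨddef
  have hphi : ∀ ξ, deriv vt ξ = Ψ (vt ξ) := fun ξ => PHI ξ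
  have hΨD : ∀ x : ℝ, 0 < x → HasDerivAt Ψ (Ψd x) x := by
    intro x hx
    have hggD : HasDerivAt gg (q * 1 + -γ * x ^ (-γ - 1)) x := by
      exact ((((hasDerivAt_id x).sub_const vm).const_mul q).add
        (Real.hasDerivAt_rpow_const (Or.inl hx.ne'))).sub_const (vm ^ (-γ))
    have hpow : HasDerivAt (fun x : ℝ => x ^ (α + 1)) ((α + 1) * x ^ (α + 1 - 1)) x :=
      Real.hasDerivAt_rpow_const (Or.inl hx.ne')
    exact (hpow.mul hggD).div_const (γ * s)
  have hrp : ∀ (e : ℝ), ContinuousOn (fun x : ℝ => x ^ e) (Icc cc dd) := by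
    intro e x hx
    exact (Real.continuousAt_rpow_const x e
      (Or.inl (ne_of_gt (lt_of_lt_of_le hcc hx.1)))).continuousWithinAt
  have hggcont : ContinuousOn gg (Icc cc dd) := by
    rw [hggdef]
    exact (((continuous_const.mul (continuous_id.sub continuous_const)).continuousOn).add
      (hrp (-γ))).sub continuousOn_const
  have hΨdcont : ContinuousOn Ψd (Icc cc dd) := by
    rw [hΨddef]
    apply ContinuousOn.div_const
    exact ((continuousOn_const.mul (hrp (α + 1 - 1))).mul hggcont).add
      ((hrp (α + 1)).mul (continuousOn_const.add (continuousOn_const.mul (hrp (-γ - 1)))))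
  obtain ⟨L0, hL0b⟩ := isCompact_Icc.exists_bound_of_continuousOn hΨdcont
  set L : ℝ := max L0 0 with hLdef
  have hL0 : 0 ≤ L := le_max_right _ _
  have hLb : ∀ x ∈ Icc cc dd, ‖Ψd x‖ ≤ L := fun x hx => le_trans (hL0b x hx) (le_max_left _ _)
  have hLipgen : ∀ e ∈ Icc cc dd, Ψ e = 0 → ∀ x ∈ Icc cc dd, |Ψ x| ≤ L * |x - e| := by
    intro e he he0 x hx
    have h := Convex.norm_image_sub_le_of_norm_hasDerivWithin_le
      (f := Ψ) (f' := Ψd) (s := Icc cc dd)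
      (fun y hy => (hΨD y (lt_of_lt_of_le hcc hy.1)).hasDerivWithinAt) hLb
      (convex_Icc _ _) he hx
    rw [he0, sub_zero] at h
    simpa [Real.norm_eq_abs] using h
  have hΨvm : Ψ vm = 0 := by
    show vm ^ (α + 1) * gg vm / (γ * s) = 0
    rw [hggvm]
    simp
  have hΨvp : Ψ vp = 0 := by
    show vp ^ (α + 1) * gg vp / (γ * s) = 0
    rw [hggvp]
    simp
  -- confinement
  have hbetween : ∀ ξ, vp < vt ξ ∧ vt ξ < vm :=
    stay_between vt Ψ cc dd L vm vp hvtd hrange hphi (hLipgen vm hvmIcc hΨvm)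
      (hLipgen vp hvpIcc hΨvp) hvb hva hvplt hL0
  -- strict negativity of the derivative
  have hneg : ∀ ξ, deriv vt ξ < 0 := by
    intro ξ
    obtain ⟨h1, h2⟩ := hbetween ξ
    have hxI : vt ξ ∈ Icc vp vm := ⟨h1.le, h2.le⟩
    have hPpos : 0 < (m2 / 2) * ((vt ξ - vp) * (vm - vt ξ)) := by
      apply mul_pos (by linarith)
      exact mul_pos (by linarith) (by linarith)
    have hggneg : gg (vt ξ) < 0 := lt_of_le_of_lt (hggub (vt ξ) hxI) (by linarith)
    rw [PHI ξ]
    apply div_neg_of_neg_of_pos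
    · exact mul_neg_of_pos_of_neg (Real.rpow_pos_of_pos (hpos ξ) _) hggneg
    · positivity
  have hanti : StrictAnti vt := strictAnti_of_deriv_neg hneg
  -- uniform bounds  k1 * z * y ≤ -v' ≤ k2 * z * y
  have hsl : Real.sqrt m1 ≤ s := by rw [hsdef]; exact Real.sqrt_le_sqrt hm1q
  have hsu : s ≤ Real.sqrt M1 := by rw [hsdef]; exact Real.sqrt_le_sqrt hqM1
  have hsm1 : 0 < Real.sqrt m1 := Real.sqrt_pos.mpr hm1
  have hsM1 : 0 < Real.sqrt M1 := Real.sqrt_pos.mpr hM1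
  have KB : ∀ ξ, k1 * ((vt ξ - vp) * (vm - vt ξ)) ≤ -deriv vt ξ ∧
      -deriv vt ξ ≤ k2 * ((vt ξ - vp) * (vm - vt ξ)) := by
    intro ξ
    obtain ⟨h1, h2⟩ := hbetween ξ
    have hxI : vt ξ ∈ Icc vp vm := ⟨h1.le, h2.le⟩
    have hx0 : 0 < vt ξ := hpos ξ
    set x : ℝ := vt ξ with hxdef
    set P : ℝ := (x - vp) * (vm - x) with hPdef
    have hPpos : 0 < P := mul_pos (by linarith) (by linarith)
    have hpowl : mA ≤ x ^ (α + 1) := by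
      rw [hmAdef]
      exact Real.rpow_le_rpow hvm2.le (le_trans hvphalf h1.le) (by linarith)
    have hpowu : x ^ (α + 1) ≤ MA := by
      rw [hMAdef]
      exact Real.rpow_le_rpow hx0.le h2.le (by linarith)
    have hggu := hggub x hxI
    have hggl := hgglb x hxI
    have hgn1 : (m2 / 2) * P ≤ -gg x := by rw [hPdef]; linarith
    have hgn2 : -gg x ≤ (M2 / 2) * P := by rw [hPdef]; linarith
    have hgnn : 0 ≤ -gg x := le_trans (by positivity) hgn1
    have hnuml : mA * ((m2 / 2) * P) ≤ x ^ (α + 1) * (-gg x) :=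
      mul_le_mul hpowl hgn1 (by positivity) (by positivity)
    have hnumu : x ^ (α + 1) * (-gg x) ≤ MA * ((M2 / 2) * P) :=
      mul_le_mul hpowu hgn2 hgnn hMA.le
    have hDneg : -deriv vt ξ = x ^ (α + 1) * (-gg x) / (γ * s) := by
      rw [PHI ξ]
      ring
    constructor
    · have hq1 : mA * ((m2 / 2) * P) / (γ * Real.sqrt M1)
          ≤ x ^ (α + 1) * (-gg x) / (γ * s) :=
        div_le_div₀ (by positivity) hnuml (by positivity)
          (mul_le_mul_of_nonneg_left hsu hγ0.le)
      have he : k1 * P = mA * ((m2 / 2) * P) / (γ * Real.sqrt M1) := by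
        rw [hk1def]; ring
      rw [hDneg, he]
      exact hq1
    · have hq2 : x ^ (α + 1) * (-gg x) / (γ * s)
          ≤ MA * ((M2 / 2) * P) / (γ * Real.sqrt m1) :=
        div_le_div₀ (by positivity) hnumu (by positivity)
          (mul_le_mul_of_nonneg_left hsl hγ0.le)
      have he : k2 * P = MA * ((M2 / 2) * P) / (γ * Real.sqrt m1) := by
        rw [hk2def]; ring
      rw [hDneg, he]
      exact hq2
  -- tail functions
  set y : ℝ → ℝ := fun ξ => vm - vt ξ with hydef
  set z : ℝ → ℝ := fun ξ => vt ξ - vp with hzdef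
  have hyd : Differentiable ℝ y := by rw [hydef]; exact (differentiable_const vm).sub hvtd
  have hzd : Differentiable ℝ z := by rw [hzdef]; exact hvtd.sub (differentiable_const vp)
  have hyderiv : ∀ ξ, deriv y ξ = -deriv vt ξ := by
    intro ξ
    rw [hydef]
    have := ((hasDerivAt_const ξ vm).sub (hvtd ξ).hasDerivAt).deriv
    simpa using this
  have hzderiv : ∀ ξ, deriv z ξ = deriv vt ξ := by
    intro ξ
    rw [hzdef]
    have := (((hvtd ξ).hasDerivAt).sub_const vp).deriv
    simpa using this
  have hy0eq : y 0 = δ / 2 := by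
    show vm - vt 0 = δ / 2
    rw [hmid, hδdef]; ring
  have hz0eq : z 0 = δ / 2 := by
    show vt 0 - vp = δ / 2
    rw [hmid, hδdef]; ring
  have hypos : ∀ ξ, 0 < y ξ := fun ξ => by
    have := (hbetween ξ).2; show (0:ℝ) < vm - vt ξ; linarith
  have hzpos : ∀ ξ, 0 < z ξ := fun ξ => by
    have := (hbetween ξ).1; show (0:ℝ) < vt ξ - vp; linarith
  have hyδ : ∀ ξ, y ξ ≤ δ := fun ξ => by
    have := (hbetween ξ).1; show vm - vt ξ ≤ δ; rw [hδdef]; linarith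
  have hzδ : ∀ ξ, z ξ ≤ δ := fun ξ => by
    have := (hbetween ξ).2; show vt ξ - vp ≤ δ; rw [hδdef]; linarith
  have hzleft : ∀ ξ ≤ 0, δ / 2 ≤ z ξ := by
    intro ξ hξ
    have h := hanti.antitone hξ
    show δ / 2 ≤ vt ξ - vp
    rw [hmid] at h
    rw [hδdef]
    linarith only [h]
  have hyright : ∀ ξ ≥ 0, δ / 2 ≤ y ξ := by
    intro ξ hξ
    have h := hanti.antitone hξ
    show δ / 2 ≤ vm - vt ξ
    rw [hmid] at h
    rw [hδdef]
    linarith only [h]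
  set a : ℝ := k1 * δ / 2 with hadef
  set b : ℝ := k2 * δ with hbdef
  have ha : 0 < a := by rw [hadef]; positivity
  have hb : 0 < b := by rw [hbdef]; positivity
  -- left tails
  have TL1 : ∀ ξ ≤ 0, y ξ ≤ y 0 * Real.exp (a * ξ) := by
    apply tail_Iic y hyd a
    intro ξ hξ
    rw [hyderiv ξ]
    have hKB := (KB ξ).1
    have h1 : (δ / 2) * y ξ ≤ z ξ * y ξ :=
      mul_le_mul_of_nonneg_right (hzleft ξ hξ.le) (hypos ξ).le
    have h2 := mul_le_mul_of_nonneg_left h1 hk1.le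
    have he : z ξ * y ξ = (vt ξ - vp) * (vm - vt ξ) := rfl
    rw [he] at h2
    calc a * y ξ = k1 * ((δ / 2) * y ξ) := by rw [hadef]; ring
      _ ≤ k1 * ((vt ξ - vp) * (vm - vt ξ)) := h2
      _ ≤ -deriv vt ξ := hKB
  have TL2 : ∀ ξ ≤ 0, y 0 * Real.exp (b * ξ) ≤ y ξ := by
    apply tail_Iic' y hyd b
    intro ξ _
    rw [hyderiv ξ]
    have hKB := (KB ξ).2
    have h1 : z ξ * y ξ ≤ δ * y ξ :=
      mul_le_mul_of_nonneg_right (hzδ ξ) (hypos ξ).le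
    have h2 := mul_le_mul_of_nonneg_left h1 hk2.le
    have he : z ξ * y ξ = (vt ξ - vp) * (vm - vt ξ) := rfl
    rw [he] at h2
    calc -deriv vt ξ ≤ k2 * ((vt ξ - vp) * (vm - vt ξ)) := hKB
      _ ≤ k2 * (δ * y ξ) := h2
      _ = b * y ξ := by rw [hbdef]; ring
  -- right tails
  have TR1 : ∀ ξ ≥ 0, z ξ ≤ z 0 * Real.exp (-a * ξ) := by
    apply tail_Ici z hzd (-a)
    intro ξ hξ
    rw [hzderiv ξ]
    have hKB := (KB ξ).1
    have h1 : (δ / 2) * z ξ ≤ y ξ * z ξ :=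
      mul_le_mul_of_nonneg_right (hyright ξ hξ.le) (hzpos ξ).le
    have h2 := mul_le_mul_of_nonneg_left h1 hk1.le
    have he : y ξ * z ξ = (vt ξ - vp) * (vm - vt ξ) := by
      show (vm - vt ξ) * (vt ξ - vp) = (vt ξ - vp) * (vm - vt ξ); ring
    rw [he] at h2
    have h3 : k1 * ((δ / 2) * z ξ) ≤ -deriv vt ξ := le_trans h2 hKB
    have h4 : -a * z ξ = -(k1 * ((δ / 2) * z ξ)) := by rw [hadef]; ring
    rw [h4]
    linarith only [h3]
  have TR2 : ∀ ξ ≥ 0, z 0 * Real.exp (-b * ξ) ≤ z ξ := by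
    apply tail_Ici' z hzd (-b)
    intro ξ _
    rw [hzderiv ξ]
    have hKB := (KB ξ).2
    have h1 : y ξ * z ξ ≤ δ * z ξ :=
      mul_le_mul_of_nonneg_right (hyδ ξ) (hzpos ξ).le
    have h2 := mul_le_mul_of_nonneg_left h1 hk2.le
    have he : y ξ * z ξ = (vt ξ - vp) * (vm - vt ξ) := by
      show (vm - vt ξ) * (vt ξ - vp) = (vt ξ - vp) * (vm - vt ξ); ring
    rw [he] at h2
    have h3 : -deriv vt ξ ≤ k2 * (δ * z ξ) := le_trans hKB h2
    have h4 : -b * z ξ = -(k2 * (δ * z ξ)) := by rw [hbdef]; ring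
    rw [h4]
    linarith only [h3]
  -- rate comparisons
  have haε : C1 * ε ≤ a := by
    have h1 := mul_le_mul_of_nonneg_left hδl hk1.le
    have h2 : C1 * ε = k1 * (ε / M1) / 2 := by
      rw [hC1def]; field_simp
    rw [h2, hadef]
    linarith only [h1]
  have hbε : b ≤ C2 * ε := by
    have h1 := mul_le_mul_of_nonneg_left hδu hk2.le
    have h2 : C2 * ε = k2 * (ε / m1) := by
      rw [hC2def]; field_simp
    rw [h2, hbdef]
    linarith only [h1]
  have hδε1 : ε / M1 ≤ δ := hδl
  have hcoefl : Clow * ε ^ 2 ≤ k1 * ((δ / 2) * (δ / 2)) := by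
    have hεM1 : 0 ≤ ε / M1 := by positivity
    have h := mul_le_mul hδl hδl hεM1 hδ.le
    have h2 := mul_le_mul_of_nonneg_left h (by positivity : (0:ℝ) ≤ k1 / 4)
    have e1 : Clow * ε ^ 2 = k1 / 4 * (ε / M1 * (ε / M1)) := by
      rw [hClowdef]; field_simp
    have e2 : k1 * ((δ / 2) * (δ / 2)) = k1 / 4 * (δ * δ) := by ring
    rw [e1, e2]
    exact h2
  have hcoefu : k2 * (δ * (δ / 2)) ≤ Cup * ε ^ 2 := by
    have h := mul_le_mul hδu hδu (by positivity : (0:ℝ) ≤ δ) (by positivity)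
    have h2 := mul_le_mul_of_nonneg_left h (by positivity : (0:ℝ) ≤ k2 / 2)
    have e1 : Cup * ε ^ 2 = k2 / 2 * (ε / m1 * (ε / m1)) := by
      rw [hCupdef]; field_simp
    have e2 : k2 * (δ * (δ / 2)) = k2 / 2 * (δ * δ) := by ring
    rw [e1, e2]
    exact h2
  -- the main pointwise bound
  have hmain : ∀ ξ, deriv vt ξ ≤ -(Clow * ε ^ 2) * Real.exp (-C2 * ε * |ξ|) ∧
      -(Cup * ε ^ 2) * Real.exp (-C1 * ε * |ξ|) ≤ deriv vt ξ := by
    intro ξ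
    rcases le_or_gt ξ 0 with hξ | hξ
    · have habs : |ξ| = -ξ := abs_of_nonpos hξ
      have hE1 : Real.exp (-C2 * ε * |ξ|) ≤ Real.exp (b * ξ) := by
        apply Real.exp_le_exp.mpr
        rw [habs]
        have h := mul_le_mul_of_nonpos_right hbε hξ
        linarith only [h]
      have hE2 : Real.exp (a * ξ) ≤ Real.exp (-C1 * ε * |ξ|) := by
        apply Real.exp_le_exp.mpr
        rw [habs]
        have h := mul_le_mul_of_nonpos_right haε hξ
        linarith only [h]
      constructor
      · -- upper bound
        have hyl := TL2 ξ hξ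
        rw [hy0eq] at hyl
        have hzl := hzleft ξ hξ
        have h1 : (δ / 2) * ((δ / 2) * Real.exp (b * ξ)) ≤ z ξ * y ξ :=
          mul_le_mul hzl hyl (by positivity) (hzpos ξ).le
        have h2 := mul_le_mul_of_nonneg_left h1 hk1.le
        have he : z ξ * y ξ = (vt ξ - vp) * (vm - vt ξ) := rfl
        rw [he] at h2
        have h3 := le_trans h2 (KB ξ).1
        have h4 : Clow * ε ^ 2 * Real.exp (b * ξ) ≤ k1 * ((δ / 2) * ((δ / 2) * Real.exp (b * ξ))) := by
          have := mul_le_mul_of_nonneg_right hcoefl (Real.exp_pos (b * ξ)).le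
          calc Clow * ε ^ 2 * Real.exp (b * ξ)
              ≤ k1 * ((δ / 2) * (δ / 2)) * Real.exp (b * ξ) := this
            _ = k1 * ((δ / 2) * ((δ / 2) * Real.exp (b * ξ))) := by ring
        have h5 : Clow * ε ^ 2 * Real.exp (b * ξ) ≤ -deriv vt ξ := le_trans h4 h3
        have h6 : Clow * ε ^ 2 * Real.exp (-C2 * ε * |ξ|) ≤ Clow * ε ^ 2 * Real.exp (b * ξ) :=
          mul_le_mul_of_nonneg_left hE1 (by positivity)
        linarith only [h5, h6]
      · -- lower bound
        have hyu := TL1 ξ hξ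
        rw [hy0eq] at hyu
        have h1 : z ξ * y ξ ≤ δ * ((δ / 2) * Real.exp (a * ξ)) :=
          mul_le_mul (hzδ ξ) hyu (hypos ξ).le hδ.le
        have h2 := mul_le_mul_of_nonneg_left h1 hk2.le
        have he : z ξ * y ξ = (vt ξ - vp) * (vm - vt ξ) := rfl
        rw [he] at h2
        have h3 := le_trans (KB ξ).2 h2
        have h4 : k2 * (δ * ((δ / 2) * Real.exp (a * ξ))) ≤ Cup * ε ^ 2 * Real.exp (a * ξ) := by
          have := mul_le_mul_of_nonneg_right hcoefu (Real.exp_pos (a * ξ)).le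
          calc k2 * (δ * ((δ / 2) * Real.exp (a * ξ)))
              = k2 * (δ * (δ / 2)) * Real.exp (a * ξ) := by ring
            _ ≤ Cup * ε ^ 2 * Real.exp (a * ξ) := this
        have h5 : -deriv vt ξ ≤ Cup * ε ^ 2 * Real.exp (a * ξ) := le_trans h3 h4
        have h6 : Cup * ε ^ 2 * Real.exp (a * ξ) ≤ Cup * ε ^ 2 * Real.exp (-C1 * ε * |ξ|) :=
          mul_le_mul_of_nonneg_left hE2 (by positivity)
        linarith only [h5, h6]
    · have habs : |ξ| = ξ := abs_of_pos hξ
      have hE1 : Real.exp (-C2 * ε * |ξ|) ≤ Real.exp (-b * ξ) := by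
        apply Real.exp_le_exp.mpr
        rw [habs]
        have h := mul_le_mul_of_nonneg_right hbε hξ.le
        linarith only [h]
      have hE2 : Real.exp (-a * ξ) ≤ Real.exp (-C1 * ε * |ξ|) := by
        apply Real.exp_le_exp.mpr
        rw [habs]
        have h := mul_le_mul_of_nonneg_right haε hξ.le
        linarith only [h]
      constructor
      · have hzl := TR2 ξ hξ.le
        rw [hz0eq] at hzl
        have hyl := hyright ξ hξ.le
        have h1 : ((δ / 2) * Real.exp (-b * ξ)) * (δ / 2) ≤ z ξ * y ξ := by
          have := mul_le_mul hzl hyl (by positivity) (hzpos ξ).le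
          exact this
        have h2 := mul_le_mul_of_nonneg_left h1 hk1.le
        have he : z ξ * y ξ = (vt ξ - vp) * (vm - vt ξ) := rfl
        rw [he] at h2
        have h3 := le_trans h2 (KB ξ).1
        have h4 : Clow * ε ^ 2 * Real.exp (-b * ξ) ≤ k1 * (((δ / 2) * Real.exp (-b * ξ)) * (δ / 2)) := by
          have := mul_le_mul_of_nonneg_right hcoefl (Real.exp_pos (-b * ξ)).le
          calc Clow * ε ^ 2 * Real.exp (-b * ξ)
              ≤ k1 * ((δ / 2) * (δ / 2)) * Real.exp (-b * ξ) := this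
            _ = k1 * (((δ / 2) * Real.exp (-b * ξ)) * (δ / 2)) := by ring
        have h5 : Clow * ε ^ 2 * Real.exp (-b * ξ) ≤ -deriv vt ξ := le_trans h4 h3
        have h6 : Clow * ε ^ 2 * Real.exp (-C2 * ε * |ξ|) ≤ Clow * ε ^ 2 * Real.exp (-b * ξ) :=
          mul_le_mul_of_nonneg_left hE1 (by positivity)
        linarith only [h5, h6]
      · have hzu := TR1 ξ hξ.le
        rw [hz0eq] at hzu
        have h1 : z ξ * y ξ ≤ ((δ / 2) * Real.exp (-a * ξ)) * δ :=
          mul_le_mul hzu (hyδ ξ) (hypos ξ).le (by positivity)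
        have h2 := mul_le_mul_of_nonneg_left h1 hk2.le
        have he : z ξ * y ξ = (vt ξ - vp) * (vm - vt ξ) := rfl
        rw [he] at h2
        have h3 := le_trans (KB ξ).2 h2
        have h4 : k2 * (((δ / 2) * Real.exp (-a * ξ)) * δ) ≤ Cup * ε ^ 2 * Real.exp (-a * ξ) := by
          have := mul_le_mul_of_nonneg_right hcoefu (Real.exp_pos (-a * ξ)).le
          calc k2 * (((δ / 2) * Real.exp (-a * ξ)) * δ)
              = k2 * (δ * (δ / 2)) * Real.exp (-a * ξ) := by ring
            _ ≤ Cup * ε ^ 2 * Real.exp (-a * ξ) := this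
        have h5 : -deriv vt ξ ≤ Cup * ε ^ 2 * Real.exp (-a * ξ) := le_trans h3 h4
        have h6 : Cup * ε ^ 2 * Real.exp (-a * ξ) ≤ Cup * ε ^ 2 * Real.exp (-C1 * ε * |ξ|) :=
          mul_le_mul_of_nonneg_left hE2 (by positivity)
        linarith only [h5, h6]
  -- final conclusions
  have hCle : C ≤ Clow := by
    have h1 : Clow * Real.exp (-C2) ≤ Clow := by
      have : Real.exp (-C2) ≤ 1 := by
        rw [← Real.exp_zero]
        exact Real.exp_le_exp.mpr (by linarith)
      have h2 := mul_le_mul_of_nonneg_left this hClow.le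
      linarith only [h2]
    exact le_trans (min_le_left _ _) h1
  have hCle2 : C ≤ Clow * Real.exp (-C2) := min_le_left _ _
  constructor
  · intro ξ
    obtain ⟨hup', hlo'⟩ := hmain ξ
    constructor
    · have h1 : Cup * ε ^ 2 * Real.exp (-C1 * ε * |ξ|) ≤ C⁻¹ * ε ^ 2 * Real.exp (-C1 * ε * |ξ|) := by
        apply mul_le_mul_of_nonneg_right _ (Real.exp_pos _).le
        exact mul_le_mul_of_nonneg_right hCCup (by positivity)
      calc -C⁻¹ * ε ^ 2 * Real.exp (-C1 * ε * |ξ|)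
          = -(C⁻¹ * ε ^ 2 * Real.exp (-C1 * ε * |ξ|)) := by ring
        _ ≤ -(Cup * ε ^ 2 * Real.exp (-C1 * ε * |ξ|)) := by linarith only [h1]
        _ = -(Cup * ε ^ 2) * Real.exp (-C1 * ε * |ξ|) := by ring
        _ ≤ deriv vt ξ := hlo'
    · have h1 : C * ε ^ 2 * Real.exp (-C2 * ε * |ξ|) ≤ Clow * ε ^ 2 * Real.exp (-C2 * ε * |ξ|) := by
        apply mul_le_mul_of_nonneg_right _ (Real.exp_pos _).le
        exact mul_le_mul_of_nonneg_right hCle (by positivity)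
      calc deriv vt ξ ≤ -(Clow * ε ^ 2) * Real.exp (-C2 * ε * |ξ|) := hup'
        _ = -(Clow * ε ^ 2 * Real.exp (-C2 * ε * |ξ|)) := by ring
        _ ≤ -(C * ε ^ 2 * Real.exp (-C2 * ε * |ξ|)) := by linarith only [h1]
        _ = -C * ε ^ 2 * Real.exp (-C2 * ε * |ξ|) := by ring
  · intro ξ hξ
    have habsle : |ξ| ≤ 1 / ε := abs_le.mpr ⟨by linarith [hξ.1], hξ.2⟩
    have hC2ε : C2 * ε * |ξ| ≤ C2 := by
      have h1 : ε * |ξ| ≤ 1 := by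
        have := mul_le_mul_of_nonneg_left habsle hε.le
        rw [mul_one_div, div_self hε.ne'] at this
        linarith
      have h2 := mul_le_mul_of_nonneg_left h1 hC2.le
      linarith only [h2]
    have hEe : Real.exp (-C2) ≤ Real.exp (-C2 * ε * |ξ|) :=
      Real.exp_le_exp.mpr (by linarith)
    obtain ⟨hup', _⟩ := hmain ξ
    have hDabs : |deriv vt ξ| = -deriv vt ξ := abs_of_neg (hneg ξ)
    rw [hDabs]
    have h1 : Clow * ε ^ 2 * Real.exp (-C2 * ε * |ξ|) ≤ -deriv vt ξ := by
      linarith only [hup']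
    have h2 : C * ε ^ 2 ≤ Clow * ε ^ 2 * Real.exp (-C2) := by
      have := mul_le_mul_of_nonneg_right hCle2 (by positivity : (0:ℝ) ≤ ε ^ 2)
      calc C * ε ^ 2 ≤ Clow * Real.exp (-C2) * ε ^ 2 := this
        _ = Clow * ε ^ 2 * Real.exp (-C2) := by ring
    have h3 : Clow * ε ^ 2 * Real.exp (-C2) ≤ Clow * ε ^ 2 * Real.exp (-C2 * ε * |ξ|) :=
      mul_le_mul_of_nonneg_left hEe (by positivity)
    linarith only [h1, h2, h3]
end

section
/- (Effective-velocity transformation of the Navier–Stokes system.) Let γ>1, α>0, b>0 and T>0; set p(v)=v^(−γ), μ(v)=b·v^(−α), and β:=γ−α. Suppose v:(0,T)×ℝ→(0,∞) and u:(0,T)×ℝ→ℝ are smooth (three times continuously differentiable) and satisfy, on (0,T)×ℝ, ∂ₜv − ∂ₓu = 0 and ∂ₜu + ∂ₓ(p(v)) = ∂ₓ( (μ(v)/v)·∂ₓu ). Define the effective velocity h := u + (b/α)·∂ₓ( v^(−α) ). Then on (0,T)×ℝ: ∂ₜv − ∂ₓh = −(b/γ)·∂ₓ( v^β·∂ₓ(p(v))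 ) and ∂ₜh + ∂ₓ(p(v)) = 0. -/
open Function

/-- derivative of x-section in terms of fderiv -/
lemma hasDerivAt_sectX {F : ℝ × ℝ → ℝ} {t x : ℝ} (hF : DifferentiableAt ℝ F (t, x)) :
    HasDerivAt (fun y => F (t, y)) (fderiv ℝ F (t, x) (0, 1)) x :=
  hF.hasFDerivAt.comp_hasDerivAt x ((hasDerivAt_const x t).prodMk (hasDerivAt_id x))

lemma hasDerivAt_sectT {F : ℝ × ℝ → ℝ} {t x : ℝ} (hF : DifferentiableAt ℝ F (t, x)) :
    HasDerivAt (fun s => F (s, x)) (fderiv ℝ F (t, x) (1, 0)) t :=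
  hF.hasFDerivAt.comp_hasDerivAt t ((hasDerivAt_id t).prodMk (hasDerivAt_const t x))

/-- the map p ↦ fderiv F p e, as composition with the `apply` CLM, is C¹ if F is C². -/
lemma contDiff_fderiv_apply {F : ℝ × ℝ → ℝ} (hF : ContDiff ℝ 2 F) (e : ℝ × ℝ) :
    ContDiff ℝ 1 (fun p => fderiv ℝ F p e) := by
  have hG : ContDiff ℝ 1 (fderiv ℝ F) := hF.fderiv_right (by norm_num)
  exact (ContinuousLinearMap.apply ℝ ℝ e).contDiff.comp hG

lemma hasDerivAt_fderiv_applyX {F : ℝ × ℝ → ℝ} (hF : ContDiff ℝ 2 F) (e : ℝ × ℝ) (t x : ℝ) :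
    HasDerivAt (fun y => fderiv ℝ F (t, y) e)
      (fderiv ℝ (fderiv ℝ F) (t, x) (0, 1) e) x := by
  have hG : ContDiff ℝ 1 (fderiv ℝ F) := hF.fderiv_right (by norm_num)
  have h1 : HasFDerivAt (fderiv ℝ F) (fderiv ℝ (fderiv ℝ F) (t, x)) (t, x) :=
    (hG.differentiable one_ne_zero (t, x)).hasFDerivAt
  have h2 : HasFDerivAt (fun p => fderiv ℝ F p e)
      ((ContinuousLinearMap.apply ℝ ℝ e).comp (fderiv ℝ (fderiv ℝ F) (t, x))) (t, x) :=
    (ContinuousLinearMap.apply ℝ ℝ e).hasFDerivAt.comp _ h1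
  simpa [Function.comp_def] using h2.comp_hasDerivAt x ((hasDerivAt_const x t).prodMk (hasDerivAt_id x))

lemma hasDerivAt_fderiv_applyT {F : ℝ × ℝ → ℝ} (hF : ContDiff ℝ 2 F) (e : ℝ × ℝ) (t x : ℝ) :
    HasDerivAt (fun s => fderiv ℝ F (s, x) e)
      (fderiv ℝ (fderiv ℝ F) (t, x) (1, 0) e) t := by
  have hG : ContDiff ℝ 1 (fderiv ℝ F) := hF.fderiv_right (by norm_num)
  have h1 : HasFDerivAt (fderiv ℝ F) (fderiv ℝ (fderiv ℝ F) (t, x)) (t, x) :=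
    (hG.differentiable one_ne_zero (t, x)).hasFDerivAt
  have h2 : HasFDerivAt (fun p => fderiv ℝ F p e)
      ((ContinuousLinearMap.apply ℝ ℝ e).comp (fderiv ℝ (fderiv ℝ F) (t, x))) (t, x) :=
    (ContinuousLinearMap.apply ℝ ℝ e).hasFDerivAt.comp _ h1
  simpa [Function.comp_def] using h2.comp_hasDerivAt t ((hasDerivAt_id t).prodMk (hasDerivAt_const t x))

/-- Clairaut for curried sections. -/
lemma deriv_swap {F : ℝ × ℝ → ℝ} (hF : ContDiff ℝ 2 F) (t x : ℝ) :
    deriv (fun s => deriv (fun y => F (s, y)) x) t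
      = deriv (fun y => deriv (fun s => F (s, y)) t) x := by
  have hd : Differentiable ℝ F := hF.differentiable (by norm_num)
  have e1 : (fun s => deriv (fun y => F (s, y)) x) = fun s => fderiv ℝ F (s, x) (0, 1) := by
    funext s; exact (hasDerivAt_sectX (hd (s, x))).deriv
  have e2 : (fun y => deriv (fun s => F (s, y)) t) = fun y => fderiv ℝ F (t, y) (1, 0) := by
    funext y; exact (hasDerivAt_sectT (hd (t, y))).deriv
  rw [e1, e2, (hasDerivAt_fderiv_applyT hF (0,1) t x).deriv,
    (hasDerivAt_fderiv_applyX hF (1,0) t x).deriv]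
  exact second_derivative_symmetric (fun y => (hd y).hasFDerivAt)
    ((hF.fderiv_right (m := 1) (by norm_num)).differentiable one_ne_zero (t, x)).hasFDerivAt _ _


/-- Effective-velocity (Bresch-Desjardins) transformation of the Navier-Stokes system:
with `h := u + (b/α)·∂ₓ(v^(-α))`, the system `vₜ - uₓ = 0`,
`uₜ + p(v)ₓ = ((μ(v)/v)uₓ)ₓ` becomes `vₜ - hₓ = -(b/γ)(v^β p(v)ₓ)ₓ`, `hₜ + p(v)ₓ = 0`. -/
theorem stmt14 (γ α b T : ℝ) (hγ : 1 < γ) (hα : 0 < α) (hb : 0 < b) (hT : 0 < T)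
    (v u : ℝ → ℝ → ℝ)
    (hv : ContDiff ℝ 3 (Function.uncurry v)) (hu : ContDiff ℝ 3 (Function.uncurry u))
    (hvpos : ∀ t x, 0 < v t x)
    (heq1 : ∀ t ∈ Set.Ioo (0 : ℝ) T, ∀ x : ℝ,
      deriv (fun s => v s x) t - deriv (fun y => u t y) x = 0)
    (heq2 : ∀ t ∈ Set.Ioo (0 : ℝ) T, ∀ x : ℝ,
      deriv (fun s => u s x) t + deriv (fun y => pres γ (v t y)) x =
        deriv (fun y => (b * (v t y) ^ (-α) / v t y) * deriv (fun z => u t z) y) x)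
    (h : ℝ → ℝ → ℝ)
    (hdef : ∀ t x, h t x = u t x + (b / α) * deriv (fun y => (v t y) ^ (-α)) x) :
    (∀ t ∈ Set.Ioo (0 : ℝ) T, ∀ x : ℝ,
      deriv (fun s => v s x) t - deriv (fun y => h t y) x =
        -(b / γ) * deriv (fun y => (v t y) ^ (γ - α)
            * deriv (fun z => pres γ (v t z)) y) x) ∧
    (∀ t ∈ Set.Ioo (0 : ℝ) T, ∀ x : ℝ,
      deriv (fun s => h s x) t + deriv (fun y => pres γ (v t y)) x = 0) := by
  have hα' : α ≠ 0 := hα.ne'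
  have hγ0 : γ ≠ 0 := by positivity
  have hvd : Differentiable ℝ (uncurry v) := hv.differentiable (by norm_num)
  have hud : Differentiable ℝ (uncurry u) := hu.differentiable (by norm_num)
  set W : ℝ × ℝ → ℝ := fun p => v p.1 p.2 ^ (-α) with hWdef
  have hW : ContDiff ℝ 2 W := by
    apply contDiff_iff_contDiffAt.mpr
    intro p
    exact ((hv.of_le (by norm_num)).contDiffAt).rpow_const_of_ne (ne_of_gt (hvpos p.1 p.2))
  have hWd : Differentiable ℝ W := hW.differentiable (by norm_num)
  have hAx : ∀ s x', deriv (fun y => v s y ^ (-α)) x' = fderiv ℝ W (s, x') (0, 1) :=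
    fun s x' => (hasDerivAt_sectX (hWd (s, x'))).deriv
  have hh : ∀ s x', h s x' = u s x' + (b / α) * fderiv ℝ W (s, x') (0, 1) := by
    intro s x'; rw [hdef, hAx]
  have hvx : ∀ t x', HasDerivAt (fun y => v t y) (fderiv ℝ (uncurry v) (t, x') (0, 1)) x' :=
    fun t x' => hasDerivAt_sectX (hvd (t, x'))
  have hvt : ∀ t x', HasDerivAt (fun s => v s x') (fderiv ℝ (uncurry v) (t, x') (1, 0)) t :=
    fun t x' => hasDerivAt_sectT (hvd (t, x'))
  have hAform : ∀ t x', fderiv ℝ W (t, x') (0, 1)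
      = fderiv ℝ (uncurry v) (t, x') (0, 1) * (-α) * v t x' ^ (-α - 1) := fun t x' =>
    ((hasDerivAt_sectX (hWd (t, x'))).deriv).symm.trans
      (((hvx t x').rpow_const (Or.inl (hvpos t x').ne')).deriv)
  refine ⟨?_, ?_⟩
  · intro t ht x
    have hx1 := heq1 t ht x
    rw [sub_eq_zero] at hx1
    have h1 : HasDerivAt (fun y => u t y) (fderiv ℝ (uncurry u) (t, x) (0, 1)) x :=
      hasDerivAt_sectX (hud (t, x))
    have h2 := hasDerivAt_fderiv_applyX hW (0, 1) t x
    have hhx : deriv (fun y => h t y) x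
        = deriv (fun y => u t y) x + (b / α) * fderiv ℝ (fderiv ℝ W) (t, x) (0, 1) (0, 1) := by
      have he : (fun y => h t y) = fun y => u t y + (b / α) * fderiv ℝ W (t, y) (0, 1) :=
        funext fun y => hh t y
      rw [he, (h1.fun_add (h2.const_mul (b / α))).deriv, h1.deriv]
    have hmain : (fun y => v t y ^ (γ - α) * deriv (fun z => pres γ (v t z)) y)
        = fun y => (γ / α) * fderiv ℝ W (t, y) (0, 1) := by
      funext y
      have hp : deriv (fun z => pres γ (v t z)) y
          = fderiv ℝ (uncurry v) (t, y) (0, 1) * (-γ) * v t y ^ (-γ - 1) := by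
        simp only [pres]
        exact ((hvx t y).rpow_const (Or.inl (hvpos t y).ne')).deriv
      rw [hp, hAform t y]
      have hvy := hvpos t y
      have e : v t y ^ (γ - α) * v t y ^ (-γ - 1) = v t y ^ (-α - 1) := by
        rw [← Real.rpow_add hvy]; ring_nf
      calc v t y ^ (γ - α) * (fderiv ℝ (uncurry v) (t, y) (0, 1) * (-γ) * v t y ^ (-γ - 1))
          = (-γ) * fderiv ℝ (uncurry v) (t, y) (0, 1)
              * (v t y ^ (γ - α) * v t y ^ (-γ - 1)) := by ring
        _ = (-γ) * fderiv ℝ (uncurry v) (t, y) (0, 1) * v t y ^ (-α - 1) := by rw [e]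
        _ = (γ / α) * (fderiv ℝ (uncurry v) (t, y) (0, 1) * (-α) * v t y ^ (-α - 1)) := by
            field_simp
    rw [hhx, hmain, (h2.const_mul (γ / α)).deriv, hx1]
    field_simp
    ring
  · intro t ht x
    have h1 : HasDerivAt (fun s => u s x) (fderiv ℝ (uncurry u) (t, x) (1, 0)) t :=
      hasDerivAt_sectT (hud (t, x))
    have h2 := hasDerivAt_fderiv_applyT hW (0, 1) t x
    have hht : deriv (fun s => h s x) t
        = deriv (fun s => u s x) t + (b / α) * deriv (fun s => fderiv ℝ W (s, x) (0, 1)) t := by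
      have he : (fun s => h s x) = fun s => u s x + (b / α) * fderiv ℝ W (s, x) (0, 1) :=
        funext fun s => hh s x
      rw [he, (h1.fun_add (h2.const_mul (b / α))).deriv, h1.deriv, h2.deriv]
    have hswap : deriv (fun s => fderiv ℝ W (s, x) (0, 1)) t
        = deriv (fun y => deriv (fun s => W (s, y)) t) x := by
      have he : (fun s => fderiv ℝ W (s, x) (0, 1)) = fun s => deriv (fun y => W (s, y)) x :=
        funext fun s => (hAx s x).symm
      rw [he, deriv_swap hW t x]
    have hWtf : (fun y => deriv (fun s => W (s, y)) t)
        = fun y => deriv (fun z => u t z) y * (-α) * v t y ^ (-α - 1) := by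
      funext y
      have h3 := ((hvt t y).rpow_const (p := -α) (Or.inl (hvpos t y).ne')).deriv
      have h4 := heq1 t ht y
      rw [sub_eq_zero] at h4
      rw [show (fun s => W (s, y)) = fun s => v s y ^ (-α) from rfl, h3, ← (hvt t y).deriv, h4]
    have hg : (fun y => (b / α) * (deriv (fun z => u t z) y * (-α) * v t y ^ (-α - 1)))
        = fun y => -((b * v t y ^ (-α) / v t y) * deriv (fun z => u t z) y) := by
      funext y
      have hvy := hvpos t y
      have e : v t y ^ (-α - 1) = v t y ^ (-α) / v t y := by
        rw [Real.rpow_sub hvy, Real.rpow_one]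
      rw [e]; field_simp
    have hfin : (b / α) * deriv (fun y => deriv (fun z => u t z) y * (-α) * v t y ^ (-α - 1)) x
        = - deriv (fun y => (b * v t y ^ (-α) / v t y) * deriv (fun z => u t z) y) x := by
      rw [← deriv_const_mul_field (b / α), hg]
      exact deriv.neg
    have h5 := heq2 t ht x
    rw [hht, hswap, hWtf, hfin]
    linarith [h5]
end
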